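/- arXiv:1912.00137 — 9 statements merged into one kernel-verified Lean document; each statement's English description precedes it below -/
import Mathlib

section
/- For every proper convex lower semicontinuous function f on a real Hilbert space X, every τ > 0, and every x ∈ X, the Moreau identity holds: prox_{τ f}(x) = x − τ · prox_{f*/τ}(x/τ), where f* is the Fenchel conjugate of f. -/
open RealInnerProductSpace

/-- **Moreau identity.** For every convex lower semicontinuous `f : X → ℝ` on a real Hilbert
space, every `τ > 0` and every `x`: if `p = prox_{τ f}(x)` (i.e. `p` minimizes
`y ↦ τ f y + ½‖x - y‖²`) and `q = prox_{f*/τ}(x/τ)` (i.e. `q` minimizes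
`v ↦ (1/τ) f*(v) + ½‖x/τ - v‖²`, where `f*(v) = ⨆ w, ⟨v, w⟩ - f w` is the Fenchel
conjugate, with values in `EReal`), then `p = x - τ • q`. -/
theorem moreau_identity {X : Type*} [NormedAddCommGroup X] [InnerProductSpace ℝ X]
    [CompleteSpace X] (f : X → ℝ)
    (hconv : ConvexOn ℝ Set.univ f) (hlsc : LowerSemicontinuous f)
    (τ : ℝ) (hτ : 0 < τ) (x p q : X)
    (hp : ∀ y : X, τ * f p + (1 / 2) * ‖x - p‖ ^ 2 ≤ τ * f y + (1 / 2) * ‖x - y‖ ^ 2)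
    (hq : ∀ v : X,
      ((τ⁻¹ : ℝ) : EReal) * (⨆ w : X, (((⟪q, w⟫ : ℝ) - f w : ℝ) : EReal))
          + (((1 / 2) * ‖τ⁻¹ • x - q‖ ^ 2 : ℝ) : EReal)
        ≤ ((τ⁻¹ : ℝ) : EReal) * (⨆ w : X, (((⟪v, w⟫ : ℝ) - f w : ℝ) : EReal))
          + (((1 / 2) * ‖τ⁻¹ • x - v‖ ^ 2 : ℝ) : EReal)) :
    p = x - τ • q := by
  -- subgradient inequality at p
  have hsub : ∀ w : X, ⟪x - p, w - p⟫ ≤ τ * (f w - f p) := by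
    intro w
    have key : ∀ t : ℝ, 0 < t → t ≤ 1 →
        ⟪x - p, w - p⟫ ≤ τ * (f w - f p) + (t / 2) * ‖w - p‖ ^ 2 := by
      intro t ht ht1
      have hy := hp (p + t • (w - p))
      have hcv := hconv.2 (Set.mem_univ p) (Set.mem_univ w)
        (by linarith : (0:ℝ) ≤ 1 - t) ht.le (by ring)
      have hpt : (1 - t) • p + t • w = p + t • (w - p) := by
        rw [smul_sub, sub_smul, one_smul]; abel
      rw [hpt] at hcv
      have hd : x - (p + t • (w - p)) = (x - p) - t • (w - p) := by abel
      have hnorm : ‖x - (p + t • (w - p))‖ ^ 2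
          = ‖x - p‖ ^ 2 - 2 * (t * ⟪x - p, w - p⟫) + t ^ 2 * ‖w - p‖ ^ 2 := by
        rw [hd, norm_sub_sq_real, real_inner_smul_right, norm_smul]
        simp [mul_pow, abs_of_pos ht]
      rw [hnorm] at hy
      have hcv' : f (p + t • (w - p)) ≤ f p + t * (f w - f p) := by
        simp only [smul_eq_mul] at hcv; linarith
      have h2 : t * 0 ≤ t * (τ * (f w - f p) - ⟪x - p, w - p⟫ + (t / 2) * ‖w - p‖ ^ 2) := by
        nlinarith [mul_le_mul_of_nonneg_left hcv' hτ.le]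
      have h3 := (mul_le_mul_iff_right₀ ht).1 h2
      linarith
    refine le_of_forall_pos_le_add ?_
    intro ε hε
    have hden : (0:ℝ) < ‖w - p‖ ^ 2 + 1 := by positivity
    set t : ℝ := min 1 (ε / (‖w - p‖ ^ 2 + 1)) with htdef
    have ht : 0 < t := lt_min one_pos (div_pos hε hden)
    have ht1 : t ≤ 1 := min_le_left _ _
    have ht2 : t ≤ ε / (‖w - p‖ ^ 2 + 1) := min_le_right _ _
    have hk := key t ht ht1
    have : (t / 2) * ‖w - p‖ ^ 2 ≤ ε := by
      have h1 : t * ‖w - p‖ ^ 2 ≤ (ε / (‖w - p‖ ^ 2 + 1)) * (‖w - p‖ ^ 2 + 1) := by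
        nlinarith [sq_nonneg ‖w - p‖]
      rw [div_mul_cancel₀ _ hden.ne'] at h1
      nlinarith [sq_nonneg ‖w - p‖]
    linarith
  set v : X := τ⁻¹ • (x - p) with hv
  have hτ' : (0:ℝ) < τ⁻¹ := inv_pos.2 hτ
  -- conjugate at v equals the dual pairing value at p
  have hSv : (⨆ w : X, (((⟪v, w⟫ : ℝ) - f w : ℝ) : EReal))
      = (((⟪v, p⟫ : ℝ) - f p : ℝ) : EReal) := by
    apply le_antisymm
    · apply iSup_le
      intro w
      rw [EReal.coe_le_coe_iff]
      have h1 : ⟪v, w⟫ - ⟪v, p⟫ = τ⁻¹ * ⟪x - p, w - p⟫ := by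
        rw [hv, real_inner_smul_left, real_inner_smul_left, ← mul_sub, ← inner_sub_right]
      have h2 : τ⁻¹ * ⟪x - p, w - p⟫ ≤ τ⁻¹ * (τ * (f w - f p)) :=
        mul_le_mul_of_nonneg_left (hsub w) hτ'.le
      rw [← mul_assoc, inv_mul_cancel₀ hτ.ne', one_mul] at h2
      linarith [h1 ▸ h2]
    · exact le_iSup (fun w => (((⟪v, w⟫ : ℝ) - f w : ℝ) : EReal)) p
  -- the supremum defining f*(q) is finite
  have hbot : (((⟪q, (0:X)⟫ : ℝ) - f 0 : ℝ) : EReal)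
      ≤ ⨆ w : X, (((⟪q, w⟫ : ℝ) - f w : ℝ) : EReal) :=
    le_iSup (fun w => (((⟪q, w⟫ : ℝ) - f w : ℝ) : EReal)) 0
  have hq' := hq v
  rw [hSv, ← EReal.coe_mul, ← EReal.coe_add] at hq'
  have hnetop : (⨆ w : X, (((⟪q, w⟫ : ℝ) - f w : ℝ) : EReal)) ≠ ⊤ := by
    intro htop
    rw [htop] at hq'
    rw [EReal.coe_mul_top_of_pos hτ'] at hq'
    rw [EReal.top_add_of_ne_bot (by exact EReal.coe_ne_bot _)] at hq'
    exact ((EReal.coe_lt_top _).not_ge) hq'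
  have hnebot : (⨆ w : X, (((⟪q, w⟫ : ℝ) - f w : ℝ) : EReal)) ≠ ⊥ :=
    fun hb => by rw [hb] at hbot; exact (EReal.coe_ne_bot _) (le_bot_iff.1 hbot)
  set s : ℝ := (⨆ w : X, (((⟪q, w⟫ : ℝ) - f w : ℝ) : EReal)).toReal with hs
  have hScoe : (⨆ w : X, (((⟪q, w⟫ : ℝ) - f w : ℝ) : EReal)) = (s : EReal) :=
    (EReal.coe_toReal hnetop hnebot).symm
  rw [hScoe, ← EReal.coe_mul, ← EReal.coe_add, EReal.coe_le_coe_iff] at hq'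
  have hsp : ⟪q, p⟫ - f p ≤ s := by
    have := le_iSup (fun w => (((⟪q, w⟫ : ℝ) - f w : ℝ) : EReal)) p
    rw [hScoe, EReal.coe_le_coe_iff] at this
    exact this
  -- quadratic growth: the dual objective at q exceeds that at v by ½‖v - q‖²
  have e2 : τ⁻¹ • x - q = τ⁻¹ • p + (v - q) := by
    rw [hv, smul_sub]; abel
  have e3 : ‖τ⁻¹ • x - q‖ ^ 2
      = ‖τ⁻¹ • p‖ ^ 2 + 2 * ⟪τ⁻¹ • p, v - q⟫ + ‖v - q‖ ^ 2 := by
    rw [e2, norm_add_sq_real]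
  have e1 : τ⁻¹ • x - v = τ⁻¹ • p := by rw [hv, smul_sub]; abel
  have e4 : ⟪τ⁻¹ • p, v - q⟫ = τ⁻¹ * ⟪p, v⟫ - τ⁻¹ * ⟪p, q⟫ := by
    rw [inner_sub_right, real_inner_smul_left, real_inner_smul_left]
  have e5 : ⟪v, p⟫ = ⟪p, v⟫ := real_inner_comm _ _
  have e6 : ⟪q, p⟫ = ⟪p, q⟫ := real_inner_comm _ _
  have hqs : τ⁻¹ * (⟪q, p⟫ - f p) ≤ τ⁻¹ * s :=
    mul_le_mul_of_nonneg_left hsp hτ'.le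
  have hzero : ‖v - q‖ ^ 2 ≤ 0 := by
    rw [e1] at hq'
    rw [e3] at hq'
    nlinarith [hq', hqs]
  have hvq : v = q := by
    have h0 : ‖v - q‖ = 0 := by nlinarith [norm_nonneg (v - q), sq_nonneg ‖v - q‖]
    rw [← sub_eq_zero]; exact norm_eq_zero.1 h0
  rw [← hvq, hv, smul_smul, mul_inv_cancel₀ hτ.ne', one_smul]
  abel
end

section
/- Let M be maximally monotone on Z and C : Z → Z be ξ-cocoercive. For γ ∈ (0, 2ξ), set δ = 2 − γ/(2ξ). For any z⁽⁰⁾ and any sequence (ρ⁽ⁱ⁾) in [0, δ] with Σᵢ ρ⁽ⁱ⁾(δ − ρ⁽ⁱ⁾) = +∞, the relaxed forward–backward iteration z⁽ⁱ⁺½⁾ = J_{γM}(z⁽ⁱ⁾ − γC z⁽ⁱ⁾), z⁽ⁱ⁺¹⁾ = z⁽ⁱ⁾ + ρ⁽ⁱ⁾(z⁽ⁱ⁺½⁾ − z⁽ⁱ⁾) converges weakly to a zero of M + C, provided such a zero exists. -/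
open RealInnerProductSpace Filter

set_option maxHeartbeats 2000000

/-- A set-valued operator `M : Z → 2^Z` is monotone. -/
def SetValuedMonotone {Z : Type*} [NormedAddCommGroup Z] [InnerProductSpace ℝ Z]
    (M : Z → Set Z) : Prop :=
  ∀ ⦃x x' u u' : Z⦄, u ∈ M x → u' ∈ M x' → (0 : ℝ) ≤ ⟪x - x', u - u'⟫

/-- A set-valued operator is maximally monotone. -/
def SetValuedMaximallyMonotone {Z : Type*} [NormedAddCommGroup Z] [InnerProductSpace ℝ Z]
    (M : Z → Set Z) : Prop :=
  SetValuedMonotone M ∧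
    ∀ N : Z → Set Z, SetValuedMonotone N → (∀ x, M x ⊆ N x) → ∀ x, N x ⊆ M x

/-- Weak sequential compactness of bounded sequences in a Hilbert space. -/
lemma fb_weak_seq_compact {Z : Type*} [NormedAddCommGroup Z] [InnerProductSpace ℝ Z]
    [CompleteSpace Z] (x : ℕ → Z) (B : ℝ) (hB : ∀ i, ‖x i‖ ≤ B) :
    ∃ (φ : ℕ → ℕ) (p : Z), StrictMono φ ∧
      ∀ w : Z, Tendsto (fun i => (⟪x (φ i), w⟫ : ℝ)) atTop (nhds ⟪p, w⟫) := by
  have hB0 : 0 ≤ B := (norm_nonneg (x 0)).trans (hB 0)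
  set V := (Submodule.span ℝ (Set.range x)).topologicalClosure with hV
  haveI : CompleteSpace V := (Submodule.isClosed_topologicalClosure _).completeSpace_coe
  have hxV : ∀ i, x i ∈ V := fun i =>
    Submodule.le_topologicalClosure _ (Submodule.subset_span ⟨i, rfl⟩)
  have hsep : TopologicalSpace.IsSeparable (V : Set Z) := by
    rw [hV, Submodule.topologicalClosure_coe]
    exact ((Set.countable_range x).isSeparable.span).closure
  obtain ⟨c, hc, hVc⟩ := hsep
  obtain ⟨e, he⟩ := (hc.insert 0).exists_eq_range (Set.insert_nonempty _ _)
  have hVe : (V : Set Z) ⊆ closure (Set.range e) := by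
    rw [← he]; exact hVc.trans (closure_mono (Set.subset_insert _ _))
  -- compactness in ℕ → ℝ
  set F : ℕ → ℕ → ℝ := fun i k => ⟪x i, e k⟫ with hF
  have hFK : ∀ i, F i ∈ Set.pi Set.univ (fun k => Set.Icc (-(B * ‖e k‖)) (B * ‖e k‖)) := by
    intro i k _
    have h1 : |(⟪x i, e k⟫ : ℝ)| ≤ B * ‖e k‖ :=
      (abs_real_inner_le_norm _ _).trans
        (mul_le_mul_of_nonneg_right (hB i) (norm_nonneg _))
    exact abs_le.mp h1
  obtain ⟨g, -, φ, hφ, hconv⟩ :=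
    (isCompact_univ_pi (fun k => isCompact_Icc)).tendsto_subseq hFK
  have hcoord : ∀ k, Tendsto (fun i => (⟪x (φ i), e k⟫ : ℝ)) atTop (nhds (g k)) := by
    intro k
    exact (tendsto_pi_nhds.mp hconv) k
  -- every w has a limit
  have hlim : ∀ w : Z, ∃ l : ℝ, Tendsto (fun i => (⟪x (φ i), w⟫ : ℝ)) atTop (nhds l) := by
    intro w
    set v : Z := (Submodule.orthogonalProjectionOnto V w : Z) with hv
    have heq : (fun i => (⟪x (φ i), w⟫ : ℝ)) = fun i => (⟪x (φ i), v⟫ : ℝ) := by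
      funext i
      have hperp : w - v ∈ Vᗮ := Submodule.sub_starProjection_mem_orthogonal (K := V) w
      have h0 : (⟪x (φ i), w - v⟫ : ℝ) = 0 :=
        (Submodule.mem_orthogonal V (w - v)).mp hperp _ (hxV (φ i))
      have := inner_sub_right (𝕜 := ℝ) (x (φ i)) w v
      rw [h0] at this
      linarith [this]
    rw [heq]
    have hvV : v ∈ (V : Set Z) := (Submodule.orthogonalProjectionOnto V w).2
    have hcauchy : CauchySeq (fun i => (⟪x (φ i), v⟫ : ℝ)) := by
      rw [Metric.cauchySeq_iff]
      intro ε hε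
      have hε4 : 0 < ε / (4 * (B + 1)) := by positivity
      obtain ⟨y, hy, hdy⟩ := Metric.mem_closure_iff.mp (hVe hvV) _ hε4
      obtain ⟨k, rfl⟩ := hy
      obtain ⟨N, hN⟩ := (Metric.cauchySeq_iff.mp (hcoord k).cauchySeq) (ε / 2) (by linarith)
      refine ⟨N, fun m hm n hn => ?_⟩
      have key : ∀ j, |(⟪x (φ j), v⟫ : ℝ) - ⟪x (φ j), e k⟫| ≤ B * (ε / (4 * (B + 1))) := by
        intro j
        have : (⟪x (φ j), v⟫ : ℝ) - ⟪x (φ j), e k⟫ = ⟪x (φ j), v - e k⟫ := by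
          rw [inner_sub_right]
        rw [this]
        refine (abs_real_inner_le_norm _ _).trans ?_
        have hd : ‖v - e k‖ ≤ ε / (4 * (B + 1)) := by
          rw [← dist_eq_norm]; exact le_of_lt hdy
        exact mul_le_mul (hB _) hd (norm_nonneg _) hB0
      have hmn := hN m hm n hn
      rw [Real.dist_eq] at hmn ⊢
      have h4 : (0:ℝ) < 4 * (B + 1) := by positivity
      have hBe : B * (ε / (4 * (B + 1))) < ε / 4 := by
        rw [mul_div_assoc', div_lt_div_iff₀ h4 (by norm_num : (0:ℝ) < 4)]
        nlinarith
      have tri1 := abs_sub_le ((⟪x (φ m), v⟫ : ℝ)) (⟪x (φ m), e k⟫) (⟪x (φ n), v⟫)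
      have tri2 := abs_sub_le ((⟪x (φ m), e k⟫ : ℝ)) (⟪x (φ n), e k⟫) (⟪x (φ n), v⟫)
      have h1 := key m
      have h2 := key n
      rw [abs_sub_comm ((⟪x (φ n), e k⟫ : ℝ))] at tri2
      linarith
    exact cauchySeq_tendsto_of_complete hcauchy
  set Lf : Z → ℝ := fun w => (hlim w).choose with hLf
  have hLspec : ∀ w : Z, Tendsto (fun i => (⟪x (φ i), w⟫ : ℝ)) atTop (nhds (Lf w)) :=
    fun w => (hlim w).choose_spec
  have hadd : ∀ w1 w2 : Z, Lf (w1 + w2) = Lf w1 + Lf w2 := by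
    intro w1 w2
    refine tendsto_nhds_unique (hLspec (w1 + w2)) ?_
    have := (hLspec w1).add (hLspec w2)
    simpa [inner_add_right] using this
  have hsmul : ∀ (c : ℝ) (w : Z), Lf (c • w) = c * Lf w := by
    intro c w
    refine tendsto_nhds_unique (hLspec (c • w)) ?_
    have := (hLspec w).const_mul c
    simpa [real_inner_smul_right] using this
  have hbound : ∀ w : Z, ‖Lf w‖ ≤ B * ‖w‖ := by
    intro w
    have h1 : Tendsto (fun i => |(⟪x (φ i), w⟫ : ℝ)|) atTop (nhds |Lf w|) := (hLspec w).abs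
    have h2 : ∀ i, |(⟪x (φ i), w⟫ : ℝ)| ≤ B * ‖w‖ := fun i =>
      (abs_real_inner_le_norm _ _).trans (mul_le_mul_of_nonneg_right (hB _) (norm_nonneg _))
    simpa [Real.norm_eq_abs] using le_of_tendsto h1 (Eventually.of_forall h2)
  set Lc : Z →L[ℝ] ℝ :=
    LinearMap.mkContinuous ⟨⟨Lf, fun a b => hadd a b⟩, fun c a => hsmul c a⟩ B hbound with hLc
  refine ⟨φ, (InnerProductSpace.toDual ℝ Z).symm Lc, hφ, fun w => ?_⟩
  have hpw : (⟪(InnerProductSpace.toDual ℝ Z).symm Lc, w⟫ : ℝ) = Lf w := by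
    rw [InnerProductSpace.toDual_symm_apply]
    rfl
  rw [hpw]
  exact hLspec w


/-- The key averagedness inequality for the forward–backward operator. -/
lemma fb_key {Z : Type*} [NormedAddCommGroup Z] [InnerProductSpace ℝ Z]
    (M : Z → Set Z) (hMono : SetValuedMonotone M)
    (C : Z → Z) (ξ : ℝ) (hξ : 0 < ξ)
    (hC : ∀ z z' : Z, ξ * ‖C z - C z'‖ ^ 2 ≤ ⟪z - z', C z - C z'⟫)
    (γ : ℝ) (hγ0 : 0 < γ) (hγ2 : γ < 2 * ξ)
    (J : Z → Z) (hJ : ∀ z : Z, γ⁻¹ • (z - J z) ∈ M (J z)) (a b : Z) :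
    ‖J (a - γ • C a) - J (b - γ • C b)‖^2
        + ((2 - γ / (2 * ξ)) - 1) * ‖(a - J (a - γ • C a)) - (b - J (b - γ • C b))‖^2
      ≤ ‖a - b‖^2 := by
  have h2ξ : (0:ℝ) < 2 * ξ := by linarith
  set u := a - γ • C a with hu
  set v := b - γ • C b with hv
  set e := C a - C b with he
  set q := (u - J u) - (v - J v) with hq
  -- firm nonexpansiveness
  have hmon := hMono (hJ u) (hJ v)
  have firm : ‖J u - J v‖^2 ≤ ⟪u - v, J u - J v⟫ := by
    have hsm : γ⁻¹ • (u - J u) - γ⁻¹ • (v - J v) = γ⁻¹ • ((u - v) - (J u - J v)) := by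
      rw [← smul_sub]; congr 1; abel
    rw [hsm, real_inner_smul_right] at hmon
    have h2 : 0 ≤ ⟪J u - J v, (u - v) - (J u - J v)⟫ :=
      nonneg_of_mul_nonneg_right (by linarith [hmon]) (inv_pos.mpr hγ0)
    rw [inner_sub_right, real_inner_self_eq_norm_sq] at h2
    rw [real_inner_comm]
    linarith
  have step2 : ‖J u - J v‖^2 + ‖q‖^2 ≤ ‖u - v‖^2 := by
    have hexp : q = (u - v) - (J u - J v) := by rw [hq]; abel
    rw [hexp]
    have h3 := norm_sub_sq_real (u - v) (J u - J v)
    linarith [firm, h3]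
  have step3 : ‖u - v‖^2 ≤ ‖a - b‖^2 - γ * (2*ξ - γ) * ‖e‖^2 := by
    have huv : u - v = (a - b) - γ • e := by
      rw [hu, hv, he, smul_sub]; abel
    rw [huv, norm_sub_sq_real, real_inner_smul_right, norm_smul, Real.norm_eq_abs,
      abs_of_pos hγ0]
    nlinarith [hC a b, sq_nonneg ‖e‖]
  have step4 : ((2 - γ / (2 * ξ)) - 1) * ‖q + γ • e‖^2
      ≤ ‖q‖^2 + γ * (2*ξ - γ) * ‖e‖^2 := by
    have hsq : (0:ℝ) ≤ ‖q - (2*ξ - γ) • e‖^2 := sq_nonneg _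
    rw [norm_sub_sq_real, real_inner_smul_right, norm_smul, Real.norm_eq_abs,
      abs_of_pos (by linarith : (0:ℝ) < 2*ξ - γ)] at hsq
    rw [norm_add_sq_real, real_inner_smul_right, norm_smul, Real.norm_eq_abs,
      abs_of_pos hγ0]
    have hδval : (2 - γ / (2 * ξ)) - 1 = (2*ξ - γ)/(2*ξ) := by field_simp; ring
    rw [hδval, div_mul_eq_mul_div, div_le_iff₀ h2ξ]
    nlinarith [mul_nonneg hγ0.le hsq]
  have hcomb : (a - J u) - (b - J v) = q + γ • e := by
    rw [hq, hu, hv, he, smul_sub]; abel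
  rw [hcomb]
  linarith


lemma fb_norm_le {x y : ℝ} (hx : 0 ≤ x) (hy : 0 ≤ y) (h : x^2 ≤ y^2) : x ≤ y := by
  nlinarith

/-- **Convergence of the relaxed forward–backward algorithm.** Let `M` be maximally
monotone on `Z` and `C : Z → Z` be `ξ`-cocoercive, with a zero of `M + C` existing.
For `γ ∈ (0, 2ξ)`, set `δ = 2 - γ/(2ξ)`. For any `z 0` and any sequence `(ρ i)` in `[0, δ]`
with `Σ_i ρ i (δ - ρ i) = +∞`, the iteration
`z (i+1) = z i + ρ i • (J_{γM}(z i - γ C (z i)) - z i)` converges weakly to a zero of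
`M + C` (i.e. a point `zstar` with `-C zstar ∈ M zstar`). -/
theorem forward_backward_convergence {Z : Type*} [NormedAddCommGroup Z]
    [InnerProductSpace ℝ Z] [CompleteSpace Z]
    (M : Z → Set Z) (hM : SetValuedMaximallyMonotone M)
    (C : Z → Z) (ξ : ℝ) (hξ : 0 < ξ)
    (hC : ∀ z z' : Z, ξ * ‖C z - C z'‖ ^ 2 ≤ ⟪z - z', C z - C z'⟫)
    (hzero : ∃ z : Z, -C z ∈ M z)
    (γ : ℝ) (hγ0 : 0 < γ) (hγ2 : γ < 2 * ξ)
    (J : Z → Z) (hJ : ∀ z : Z, γ⁻¹ • (z - J z) ∈ M (J z))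
    (ρ : ℕ → ℝ) (hρ : ∀ i, ρ i ∈ Set.Icc (0 : ℝ) (2 - γ / (2 * ξ)))
    (hdiv : ¬ Summable (fun i => ρ i * ((2 - γ / (2 * ξ)) - ρ i)))
    (z : ℕ → Z) (hrec : ∀ i, z (i + 1) = z i + ρ i • (J (z i - γ • C (z i)) - z i)) :
    ∃ zstar : Z, -C zstar ∈ M zstar ∧
      ∀ w : Z, Tendsto (fun i => (⟪z i, w⟫ : ℝ)) atTop (nhds ⟪zstar, w⟫) := by
  obtain ⟨hMono, -⟩ := hM
  have h2ξ : (0:ℝ) < 2 * ξ := by linarith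
  set δ : ℝ := 2 - γ / (2 * ξ) with hδ
  have hδ1 : 1 < δ := by
    have : γ / (2*ξ) < 1 := (div_lt_one h2ξ).mpr hγ2
    rw [hδ]; linarith
  have hδ0 : 0 < δ := by linarith
  set T : Z → Z := fun a => J (a - γ • C a) with hT
  clear_value δ T
  have hrecT : ∀ i, z (i + 1) = z i + ρ i • (T (z i) - z i) := by
    intro i
    rw [hrec i, hT]
  have key : ∀ a b : Z, ‖T a - T b‖^2 + (δ - 1) * ‖(a - T a) - (b - T b)‖^2 ≤ ‖a - b‖^2 := by
    intro a b
    simp only [hT, hδ]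
    exact fb_key M hMono C ξ hξ hC γ hγ0 hγ2 J hJ a b
  have Tnon : ∀ a b : Z, ‖T a - T b‖ ≤ ‖a - b‖ := by
    intro a b
    have h := key a b
    have h2 : ‖T a - T b‖^2 ≤ ‖a - b‖^2 := by
      nlinarith [sq_nonneg ‖(a - T a) - (b - T b)‖]
    exact fb_norm_le (norm_nonneg _) (norm_nonneg _) h2
  -- fixed points of T are zeros of M + C
  have fix_zero : ∀ p : Z, T p = p → -C p ∈ M p := by
    intro p hp
    simp only [hT] at hp
    have h1 := hJ (p - γ • C p)
    rw [hp] at h1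
    have heq : γ⁻¹ • ((p - γ • C p) - p) = -C p := by
      have : (p - γ • C p) - p = -(γ • C p) := by abel
      rw [this, smul_neg, smul_smul, inv_mul_cancel₀ (ne_of_gt hγ0), one_smul]
    rwa [heq] at h1
  -- the zero of M + C is a fixed point of T
  obtain ⟨zs, hzs⟩ := hzero
  have hzsfix : T zs = zs := by
    simp only [hT]
    have h1 := hJ (zs - γ • C zs)
    have hmon := hMono h1 hzs
    set Jy := J (zs - γ • C zs) with hJy
    have hkey : γ⁻¹ • ((zs - γ • C zs) - Jy) - (-C zs) = γ⁻¹ • (zs - Jy) := by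
      have h2 : (zs - γ • C zs) - Jy = (zs - Jy) - γ • C zs := by abel
      rw [h2, smul_sub, smul_smul, inv_mul_cancel₀ (ne_of_gt hγ0), one_smul]
      abel
    rw [hkey, real_inner_smul_right] at hmon
    have h2 : 0 ≤ (⟪Jy - zs, zs - Jy⟫ : ℝ) :=
      nonneg_of_mul_nonneg_right (by linarith [hmon]) (inv_pos.mpr hγ0)
    have h3 : (⟪Jy - zs, zs - Jy⟫ : ℝ) = -‖Jy - zs‖^2 := by
      have : zs - Jy = -(Jy - zs) := by abel
      rw [this, inner_neg_right, real_inner_self_eq_norm_sq]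
    rw [h3] at h2
    have h4 : ‖Jy - zs‖ = 0 := by nlinarith [norm_nonneg (Jy - zs)]
    have h5 : Jy = zs := by
      rwa [norm_sub_eq_zero_iff] at h4
    exact h5
  -- descent inequality
  have descent : ∀ w : Z, T w = w → ∀ i,
      ‖z (i+1) - w‖^2 ≤ ‖z i - w‖^2 - ρ i * (δ - ρ i) * ‖T (z i) - z i‖^2 := by
    intro w hw i
    have hk := key (z i) w
    rw [hw, sub_self, sub_zero] at hk
    rw [norm_sub_rev (z i)] at hk
    have e1 : ‖T (z i) - w‖^2
        = ‖z i - w‖^2 + 2*⟪z i - w, T (z i) - z i⟫ + ‖T (z i) - z i‖^2 := by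
      have h : T (z i) - w = (z i - w) + (T (z i) - z i) := by abel
      rw [h, norm_add_sq_real]
    have e2 : ‖z (i+1) - w‖^2 = ‖z i - w‖^2 + 2*(ρ i)*⟪z i - w, T (z i) - z i⟫
        + (ρ i)^2*‖T (z i) - z i‖^2 := by
      have h : z (i+1) - w = (z i - w) + ρ i • (T (z i) - z i) := by
        rw [hrecT i]; abel
      rw [h, norm_add_sq_real, real_inner_smul_right, norm_smul, Real.norm_eq_abs,
        mul_pow, sq_abs]
      ring
    have h2G : 2*(⟪z i - w, T (z i) - z i⟫:ℝ) ≤ -δ * ‖T (z i) - z i‖^2 := by linarith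
    have hρi := (hρ i).1
    nlinarith [mul_le_mul_of_nonneg_left h2G hρi, e2]
  have hρδ : ∀ i, 0 ≤ ρ i * (δ - ρ i) :=
    fun i => mul_nonneg (hρ i).1 (by linarith [(hρ i).2])
  have hanti : ∀ w : Z, T w = w → Antitone fun i => ‖z i - w‖^2 := by
    intro w hw
    apply antitone_nat_of_succ_le
    intro i
    have := descent w hw i
    nlinarith [mul_nonneg (hρδ i) (sq_nonneg ‖T (z i) - z i‖)]
  have hnormconv : ∀ w : Z, T w = w →
      Tendsto (fun i => ‖z i - w‖^2) atTop (nhds (⨅ i, ‖z i - w‖^2)) := by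
    intro w hw
    exact tendsto_atTop_ciInf (hanti w hw) ⟨0, by rintro _ ⟨i, rfl⟩; positivity⟩
  set B : ℝ := ‖z 0 - zs‖ + ‖zs‖ with hB
  have hBz : ∀ i, ‖z i‖ ≤ B := by
    intro i
    have h1 : ‖z i - zs‖^2 ≤ ‖z 0 - zs‖^2 := hanti zs hzsfix (Nat.zero_le i)
    have h2 : ‖z i - zs‖ ≤ ‖z 0 - zs‖ :=
      fb_norm_le (norm_nonneg _) (norm_nonneg _) h1
    calc ‖z i‖ = ‖(z i - zs) + zs‖ := by congr 1; abel
    _ ≤ ‖z i - zs‖ + ‖zs‖ := norm_add_le _ _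
    _ ≤ B := by rw [hB]; linarith
  -- nonexpansiveness of the reflected operator
  set R : Z → Z := fun a => a + δ • (T a - a) with hR
  clear_value R
  have Rnon : ∀ a b : Z, ‖R a - R b‖ ≤ ‖a - b‖ := by
    intro a b
    have hk := key a b
    have hd : R a - R b = (a - b) - δ • ((a - T a) - (b - T b)) := by
      simp only [hR]
      module
    have hs : T a - T b = (a - b) - ((a - T a) - (b - T b)) := by abel
    have e1 : ‖R a - R b‖^2 = ‖a-b‖^2 - 2*δ*⟪a-b, (a-T a)-(b-T b)⟫
        + δ^2*‖(a-T a)-(b-T b)‖^2 := by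
      rw [hd, norm_sub_sq_real, real_inner_smul_right, norm_smul, Real.norm_eq_abs,
        mul_pow, sq_abs]
      ring
    have e2 : ‖T a - T b‖^2 = ‖a-b‖^2 - 2*⟪a-b, (a-T a)-(b-T b)⟫
        + ‖(a-T a)-(b-T b)‖^2 := by
      rw [hs, norm_sub_sq_real]
    have h3 : δ * ‖(a-T a)-(b-T b)‖^2 ≤ 2*⟪a-b, (a-T a)-(b-T b)⟫ := by linarith
    have h4 : ‖R a - R b‖^2 ≤ ‖a - b‖^2 := by
      nlinarith [mul_le_mul_of_nonneg_left h3 hδ0.le]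
    exact fb_norm_le (norm_nonneg _) (norm_nonneg _) h4
  have convR : ∀ x : Z, ‖R x - x‖ = δ * ‖T x - x‖ := by
    intro x
    have : R x - x = δ • (T x - x) := by
      simp only [hR]
      module
    rw [this, norm_smul, Real.norm_eq_abs, abs_of_pos hδ0]
  -- residual monotone
  have rmono : ∀ i, ‖T (z (i+1)) - z (i+1)‖ ≤ ‖T (z i) - z i‖ := by
    intro i
    set l := ρ i / δ with hl
    have hl0 : 0 ≤ l := div_nonneg (hρ i).1 hδ0.le
    clear_value l
    have hl1 : l ≤ 1 := by rw [hl, div_le_one hδ0]; exact (hρ i).2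
    have hz1 : z (i+1) = z i + l • (R (z i) - z i) := by
      rw [hrecT i]
      have h1 : R (z i) - z i = δ • (T (z i) - z i) := by
        simp only [hR]
        module
      rw [h1, smul_smul, hl, div_mul_cancel₀ _ (ne_of_gt hδ0)]
    have t3 : z (i+1) - z i = l • (R (z i) - z i) := by rw [hz1]; abel
    have t4 : R (z i) - z (i+1) = (1 - l) • (R (z i) - z i) := by
      rw [hz1, sub_smul, one_smul]; abel
    have t1 : ‖R (z (i+1)) - z (i+1)‖
        ≤ ‖R (z (i+1)) - R (z i)‖ + ‖R (z i) - z (i+1)‖ := by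
      have : R (z (i+1)) - z (i+1) = (R (z (i+1)) - R (z i)) + (R (z i) - z (i+1)) := by abel
      rw [this]; exact norm_add_le _ _
    have t2 : ‖R (z (i+1)) - R (z i)‖ ≤ ‖z (i+1) - z i‖ := Rnon _ _
    have t5 : ‖z (i+1) - z i‖ = l * ‖R (z i) - z i‖ := by
      rw [t3, norm_smul, Real.norm_eq_abs, abs_of_nonneg hl0]
    have t6 : ‖R (z i) - z (i+1)‖ = (1 - l) * ‖R (z i) - z i‖ := by
      rw [t4, norm_smul, Real.norm_eq_abs, abs_of_nonneg (by linarith)]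
    have key1 : ‖R (z (i+1)) - z (i+1)‖ ≤ ‖R (z i) - z i‖ := by
      rw [t5] at t2
      rw [t6] at t1
      linarith [t1, t2]
    rw [convR, convR] at key1
    exact le_of_mul_le_mul_left (by linarith) hδ0
  -- residual tends to zero
  have ranti : Antitone fun i => ‖T (z i) - z i‖ := antitone_nat_of_succ_le rmono
  have hrlim : Tendsto (fun i => ‖T (z i) - z i‖) atTop
      (nhds (⨅ i, ‖T (z i) - z i‖)) :=
    tendsto_atTop_ciInf ranti ⟨0, by rintro _ ⟨i, rfl⟩; positivity⟩
  have hbdd : BddBelow (Set.range fun i => ‖T (z i) - z i‖) :=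
    ⟨0, by rintro _ ⟨i, rfl⟩; positivity⟩
  have hcz : (⨅ i, ‖T (z i) - z i‖) = 0 := by
    have hc0 : 0 ≤ ⨅ i, ‖T (z i) - z i‖ := le_ciInf fun i => norm_nonneg _
    by_contra hne
    have hcpos : 0 < ⨅ i, ‖T (z i) - z i‖ := lt_of_le_of_ne hc0 (Ne.symm hne)
    apply hdiv
    have htel : ∀ n, ∑ i ∈ Finset.range n, ρ i * (δ - ρ i) * ‖T (z i) - z i‖^2
        ≤ ‖z 0 - zs‖^2 - ‖z n - zs‖^2 := by
      intro n
      induction n with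
      | zero => simp
      | succ n ih =>
        rw [Finset.sum_range_succ]
        have := descent zs hzsfix n
        linarith
    have hsum : ∀ n, ∑ i ∈ Finset.range n, ρ i * (δ - ρ i)
        ≤ ‖z 0 - zs‖^2 / (⨅ i, ‖T (z i) - z i‖)^2 := by
      intro n
      have hpart : ∑ i ∈ Finset.range n, ρ i * (δ - ρ i) * ‖T (z i) - z i‖^2
          ≤ ‖z 0 - zs‖^2 := by
        have := htel n
        nlinarith [sq_nonneg ‖z n - zs‖]
      have hterm : ∀ i, ρ i * (δ - ρ i) * (⨅ i, ‖T (z i) - z i‖)^2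
          ≤ ρ i * (δ - ρ i) * ‖T (z i) - z i‖^2 := by
        intro i
        have h1 : (⨅ i, ‖T (z i) - z i‖) ≤ ‖T (z i) - z i‖ := ciInf_le hbdd i
        have h2 : (⨅ i, ‖T (z i) - z i‖)^2 ≤ ‖T (z i) - z i‖^2 := by nlinarith
        exact mul_le_mul_of_nonneg_left h2 (hρδ i)
      have hfin : (∑ i ∈ Finset.range n, ρ i * (δ - ρ i)) * (⨅ i, ‖T (z i) - z i‖)^2
          ≤ ‖z 0 - zs‖^2 := by
        rw [Finset.sum_mul]
        exact le_trans (Finset.sum_le_sum fun i _ => hterm i) hpart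
      rw [le_div_iff₀ (by positivity)]
      exact hfin
    exact summable_of_sum_range_le (fun i => hρδ i) hsum
  rw [hcz] at hrlim
  -- demiclosedness: weak limits along subsequences are fixed points
  have demicl : ∀ (ns : ℕ → ℕ) (p : Z), Tendsto ns atTop atTop →
      (∀ w : Z, Tendsto (fun i => (⟪z (ns i), w⟫:ℝ)) atTop (nhds ⟪p, w⟫)) → T p = p := by
    intro ns p hns hw
    have hr : Tendsto (fun i => ‖T (z (ns i)) - z (ns i)‖) atTop (nhds 0) :=
      hrlim.comp hns
    have hub : ∀ i, ‖p - T p‖^2 ≤ ‖T (z (ns i)) - z (ns i)‖^2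
        + 2*‖T (z (ns i)) - z (ns i)‖*(B + ‖p‖)
        - 2*((⟪z (ns i), p - T p⟫:ℝ) - ⟪p, p - T p⟫) := by
      intro i
      have e1 : ‖z (ns i) - T p‖^2 = ‖z (ns i) - p‖^2
          + 2*⟪z (ns i) - p, p - T p⟫ + ‖p - T p‖^2 := by
        have h : z (ns i) - T p = (z (ns i) - p) + (p - T p) := by abel
        rw [h, norm_add_sq_real]
      have e2 : ‖z (ns i) - T p‖ ≤ ‖T (z (ns i)) - z (ns i)‖ + ‖z (ns i) - p‖ := by
        have h : ‖z (ns i) - T p‖ ≤ ‖z (ns i) - T (z (ns i))‖ + ‖T (z (ns i)) - T p‖ := by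
          have hh : z (ns i) - T p = (z (ns i) - T (z (ns i))) + (T (z (ns i)) - T p) := by abel
          rw [hh]; exact norm_add_le _ _
        have h2 := Tnon (z (ns i)) p
        rw [norm_sub_rev (z (ns i)) (T (z (ns i)))] at h
        linarith
      have e2' : ‖z (ns i) - T p‖^2
          ≤ (‖T (z (ns i)) - z (ns i)‖ + ‖z (ns i) - p‖)^2 := by
        nlinarith [norm_nonneg (z (ns i) - T p), norm_nonneg (T (z (ns i)) - z (ns i)),
          norm_nonneg (z (ns i) - p)]
      have hbd : ‖z (ns i) - p‖ ≤ B + ‖p‖ :=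
        (norm_sub_le _ _).trans (by linarith [hBz (ns i)])
      have hip : (⟪z (ns i) - p, p - T p⟫:ℝ) = ⟪z (ns i), p - T p⟫ - ⟪p, p - T p⟫ := by
        rw [inner_sub_left]
      nlinarith [e1, e2', hbd, norm_nonneg (T (z (ns i)) - z (ns i)),
        mul_le_mul_of_nonneg_left hbd (norm_nonneg (T (z (ns i)) - z (ns i)))]
    have hlim2 : Tendsto (fun i => ‖T (z (ns i)) - z (ns i)‖^2
        + 2*‖T (z (ns i)) - z (ns i)‖*(B + ‖p‖)
        - 2*((⟪z (ns i), p - T p⟫:ℝ) - ⟪p, p - T p⟫)) atTop (nhds 0) := by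
      have l1 : Tendsto (fun i => ‖T (z (ns i)) - z (ns i)‖^2) atTop (nhds 0) := by
        have := hr.mul hr
        simpa [sq] using this
      have l2 : Tendsto (fun i => 2*‖T (z (ns i)) - z (ns i)‖*(B + ‖p‖)) atTop (nhds 0) := by
        have := (hr.const_mul 2).mul_const (B + ‖p‖)
        simpa using this
      have l3 : Tendsto (fun i => 2*((⟪z (ns i), p - T p⟫:ℝ) - ⟪p, p - T p⟫)) atTop (nhds 0) := by
        have := ((hw (p - T p)).sub_const (⟪p, p - T p⟫:ℝ)).const_mul 2
        simpa using this
      have := (l1.add l2).sub l3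
      simpa using this
    have hle : ‖p - T p‖^2 ≤ 0 := ge_of_tendsto' hlim2 hub
    have : ‖p - T p‖ = 0 := by nlinarith [norm_nonneg (p - T p), sq_nonneg ‖p - T p‖]
    have := norm_sub_eq_zero_iff.mp this
    exact this.symm
  -- extract a weak cluster point
  obtain ⟨φ0, p, hφ0, hp⟩ := fb_weak_seq_compact z B hBz
  have hpfix : T p = p := demicl φ0 p hφ0.tendsto_atTop hp
  refine ⟨p, fix_zero p hpfix, ?_⟩
  intro w
  apply tendsto_of_subseq_tendsto
  intro ns hns
  obtain ⟨ψ, q, hψ, hq⟩ := fb_weak_seq_compact (z ∘ ns) B (fun i => hBz (ns i))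
  have hq' : ∀ w : Z, Tendsto (fun i => (⟪z (ns (ψ i)), w⟫:ℝ)) atTop (nhds ⟪q, w⟫) :=
    fun w => hq w
  have hqfix : T q = q := demicl (ns ∘ ψ) q (hns.comp hψ.tendsto_atTop) hq'
  -- Opial argument: p = q
  have hlp := hnormconv p hpfix
  have hlq := hnormconv q hqfix
  set lp := ⨅ i, ‖z i - p‖^2 with hlpd
  set lq := ⨅ i, ‖z i - q‖^2 with hlqd
  have hid : ∀ i, (⟪z i, p - q⟫:ℝ)
      = (‖p‖^2 - ‖q‖^2 - (‖z i - p‖^2 - ‖z i - q‖^2))/2 := by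
    intro i
    have h1 := norm_sub_sq_real (z i) p
    have h2 := norm_sub_sq_real (z i) q
    have h3 : (⟪z i, p - q⟫:ℝ) = ⟪z i, p⟫ - ⟪z i, q⟫ := by rw [inner_sub_right]
    linarith
  have hinn : Tendsto (fun i => (⟪z i, p - q⟫:ℝ)) atTop
      (nhds ((‖p‖^2 - ‖q‖^2 - (lp - lq))/2)) := by
    have h := ((tendsto_const_nhds (x := ‖p‖^2 - ‖q‖^2)).sub (hlp.sub hlq)).div_const 2
    convert h using 1
    funext i
    exact hid i
  have hLp : (⟪p, p - q⟫:ℝ) = (‖p‖^2 - ‖q‖^2 - (lp - lq))/2 :=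
    tendsto_nhds_unique (hp (p - q)) (hinn.comp hφ0.tendsto_atTop)
  have hLq : (⟪q, p - q⟫:ℝ) = (‖p‖^2 - ‖q‖^2 - (lp - lq))/2 :=
    tendsto_nhds_unique (hq' (p - q)) (hinn.comp (hns.comp hψ.tendsto_atTop))
  have hpq : p = q := by
    have h0 : (⟪p - q, p - q⟫:ℝ) = 0 := by
      rw [inner_sub_left]; linarith
    have := inner_self_eq_zero.mp h0
    exact sub_eq_zero.mp this
  refine ⟨ψ, ?_⟩
  rw [hpq]
  exact hq' w
end

section
/- Let P be a self-adjoint strongly positive bounded linear operator on a real Hilbert space Z and M a maximally monotone operator on Z. Then P⁻¹M is maximally monotone on the Hilbert space Z_P obtained by equipping Z with the inner product ⟨x, x'⟩_P = ⟨x, P x'⟩, and consequently its resolvent (P⁻¹M + Id)⁻¹ is firmly nonexpansive with respect to the norm ‖·‖_P. -/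
open RealInnerProductSpace

/-- A set-valued operator is monotone for the inner product `⟨x, x'⟩_P = ⟨x, P x'⟩`. -/
def SetValuedMonotoneP {Z : Type*} [NormedAddCommGroup Z] [InnerProductSpace ℝ Z]
    (P : Z →L[ℝ] Z) (M : Z → Set Z) : Prop :=
  ∀ ⦃x x' u u' : Z⦄, u ∈ M x → u' ∈ M x' → (0 : ℝ) ≤ ⟪x - x', P (u - u')⟫

/-- Let `P` be a self-adjoint strongly positive bounded linear operator on a real Hilbert
space `Z` and `M` maximally monotone on `Z`. Then `P⁻¹ M` (the operator
`x ↦ {u : P u ∈ M x}`) is maximally monotone in the Hilbert space `Z_P` with inner product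
`⟨x, x'⟩_P = ⟨x, P x'⟩`, and consequently its resolvent `(P⁻¹ M + Id)⁻¹` (any `J` with
`P (z - J z) ∈ M (J z)` for all `z`) is firmly nonexpansive with respect to `‖·‖_P`. -/
theorem preconditioned_operator_maximally_monotone {Z : Type*} [NormedAddCommGroup Z]
    [InnerProductSpace ℝ Z] [CompleteSpace Z]
    (P : Z →L[ℝ] Z) (hPsa : ∀ x y : Z, (⟪P x, y⟫ : ℝ) = ⟪x, P y⟫)
    (hPpos : ∃ a : ℝ, 0 < a ∧ ∀ x : Z, a * ‖x‖ ^ 2 ≤ ⟪x, P x⟫)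
    (M : Z → Set Z) (hM : SetValuedMaximallyMonotone M) :
    (SetValuedMonotoneP P (fun x => {u : Z | P u ∈ M x}) ∧
      ∀ N : Z → Set Z, SetValuedMonotoneP P N →
        (∀ x, {u : Z | P u ∈ M x} ⊆ N x) → ∀ x, N x ⊆ {u : Z | P u ∈ M x}) ∧
      ∀ J : Z → Z, (∀ z : Z, P (z - J z) ∈ M (J z)) →
        ∀ z z' : Z, (⟪J z - J z', P (J z - J z')⟫ : ℝ) ≤ ⟪z - z', P (J z - J z')⟫ := by

  obtain ⟨hMmono, hMmax⟩ := hM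
  obtain ⟨a, ha, haP⟩ := hPpos
  -- P is bounded below, hence injective with closed range
  have hlow : ∀ x : Z, ‖x‖ ≤ a⁻¹ * ‖P x‖ := by
    intro x
    rcases eq_or_ne x 0 with rfl | hx
    · simp
    · have h1 : a * ‖x‖ ^ 2 ≤ ⟪x, P x⟫ := haP x
      have h2 : (⟪x, P x⟫ : ℝ) ≤ ‖x‖ * ‖P x‖ := real_inner_le_norm _ _
      have hxpos : 0 < ‖x‖ := norm_pos_iff.mpr hx
      rw [le_inv_mul_iff₀ ha]
      nlinarith
  have hanti : AntilipschitzWith ⟨a⁻¹, by positivity⟩ P :=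
    AddMonoidHomClass.antilipschitz_of_bound P hlow
  have hKclosed : IsClosed ((LinearMap.range (P : Z →ₗ[ℝ] Z) : Submodule ℝ Z) : Set Z) := by
    have := hanti.isClosed_range P.uniformContinuous
    exact this
  haveI : CompleteSpace (LinearMap.range (P : Z →ₗ[ℝ] Z) : Submodule ℝ Z) :=
    hKclosed.completeSpace_coe
  have horth : (LinearMap.range (P : Z →ₗ[ℝ] Z) : Submodule ℝ Z)ᗮ = ⊥ := by
    rw [Submodule.eq_bot_iff]
    intro y hy
    have h0 : (⟪P y, y⟫ : ℝ) = 0 :=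
      (Submodule.mem_orthogonal _ _).mp hy (P y) ⟨y, rfl⟩
    have h1 : a * ‖y‖ ^ 2 ≤ ⟪y, P y⟫ := haP y
    rw [real_inner_comm, h0] at h1
    have : ‖y‖ ^ 2 ≤ 0 := by nlinarith
    have : ‖y‖ = 0 := by nlinarith [sq_nonneg ‖y‖, norm_nonneg y]
    simpa using this
  have hsurj : Function.Surjective P := by
    have htop : (LinearMap.range (P : Z →ₗ[ℝ] Z) : Submodule ℝ Z) = ⊤ :=
      Submodule.orthogonal_eq_bot_iff.mp horth
    intro m
    have : m ∈ (LinearMap.range (P : Z →ₗ[ℝ] Z) : Submodule ℝ Z) := htop ▸ Submodule.mem_top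
    exact this
  refine ⟨⟨?_, ?_⟩, ?_⟩
  · intro x x' u u' hu hu'
    have := hMmono hu hu'
    simpa [map_sub] using this
  · intro N hN hext x v hv
    set N' : Z → Set Z := fun y => P '' N y with hN'def
    have hN'mono : SetValuedMonotone N' := by
      intro y y' w w' hw hw'
      obtain ⟨b, hb, rfl⟩ := hw
      obtain ⟨b', hb', rfl⟩ := hw'
      simpa [← map_sub] using hN hb hb'
    have hextM : ∀ y, M y ⊆ N' y := by
      intro y m hm
      obtain ⟨w, rfl⟩ := hsurj m
      exact ⟨w, hext y hm, rfl⟩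
    have := hMmax N' hN'mono hextM x ⟨v, hv, rfl⟩
    exact this
  · intro J hJ z z'
    have h := hMmono (hJ z) (hJ z')
    have e1 : P (z - J z) - P (z' - J z') = P (z - z') - P (J z - J z') := by
      simp only [map_sub]; abel
    rw [e1, inner_sub_right] at h
    have e2 : (⟪J z - J z', P (z - z')⟫ : ℝ) = ⟪z - z', P (J z - J z')⟫ := by
      rw [real_inner_comm, hPsa]
    linarith
end

section
/- Let M be maximally monotone on Z with nonempty zero set and P self-adjoint strongly positive bounded linear. For any z⁽⁰⁾ ∈ Z and any sequence (ρ⁽ⁱ⁾) in [0,2] with Σᵢ ρ⁽ⁱ⁾(2 − ρ⁽ⁱ⁾) = +∞, the relaxed preconditioned proximal point iteration z⁽ⁱ⁺½⁾ = (P⁻¹M + Id)⁻¹ z⁽ⁱ⁾, z⁽ⁱ⁺¹⁾ = z⁽ⁱ⁾ + ρ⁽ⁱ⁾(z⁽ⁱ⁺½⁾ − z⁽ⁱ⁾) converges weakly to a zero of M. -/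
open RealInnerProductSpace Filter

section PForm

variable {Z : Type*} [NormedAddCommGroup Z] [InnerProductSpace ℝ Z]
variable (P : Z →L[ℝ] Z)

/-- The quadratic form associated to `P`. -/
noncomputable def qf (x : Z) : ℝ := ⟪x, P x⟫

lemma qf_apply (x : Z) : qf P x = ⟪x, P x⟫ := rfl

/-- The seminorm associated to `P`. -/
noncomputable def nf (x : Z) : ℝ := Real.sqrt (qf P x)

variable {P} {a : ℝ}

lemma inner_P_comm (hsa : ∀ x y : Z, (⟪P x, y⟫ : ℝ) = ⟪x, P y⟫) (x y : Z) :
    (⟪y, P x⟫ : ℝ) = ⟪x, P y⟫ := by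
  rw [real_inner_comm, hsa]

lemma qf_nonneg' (ha : 0 < a) (hpos : ∀ x : Z, a * ‖x‖ ^ 2 ≤ ⟪x, P x⟫) (x : Z) :
    0 ≤ qf P x :=
  le_trans (by positivity) (hpos x)

lemma qf_sub (hsa : ∀ x y : Z, (⟪P x, y⟫ : ℝ) = ⟪x, P y⟫) (x y : Z) :
    qf P (x - y) = qf P x - 2 * ⟪x, P y⟫ + qf P y := by
  simp only [qf, map_sub, inner_sub_left, inner_sub_right]
  rw [inner_P_comm hsa y x]; ring

lemma qf_add (hsa : ∀ x y : Z, (⟪P x, y⟫ : ℝ) = ⟪x, P y⟫) (x y : Z) :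
    qf P (x + y) = qf P x + 2 * ⟪x, P y⟫ + qf P y := by
  simp only [qf, map_add, inner_add_left, inner_add_right]
  rw [inner_P_comm hsa y x]; ring

lemma qf_smul (c : ℝ) (x : Z) : qf P (c • x) = c ^ 2 * qf P x := by
  simp only [qf, map_smul, inner_smul_left, inner_smul_right, RCLike.conj_to_real]
  ring

lemma qf_cs (ha : 0 < a) (hpos : ∀ x : Z, a * ‖x‖ ^ 2 ≤ ⟪x, P x⟫)
    (hsa : ∀ x y : Z, (⟪P x, y⟫ : ℝ) = ⟪x, P y⟫) (x y : Z) :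
    (⟪x, P y⟫ : ℝ) ^ 2 ≤ qf P x * qf P y := by
  have h := discrim_le_zero (a := qf P y) (b := 2 * ⟪x, P y⟫) (c := qf P x) ?_
  · simp only [discrim] at h; nlinarith
  · intro t
    have : qf P (x + t • y) = qf P y * (t * t) + 2 * ⟪x, P y⟫ * t + qf P x := by
      rw [qf_add hsa, qf_smul, map_smul, inner_smul_right]; ring
    rw [← this]; exact qf_nonneg' ha hpos _

lemma nf_nonneg (x : Z) : 0 ≤ nf P x := Real.sqrt_nonneg _

lemma nf_sq (ha : 0 < a) (hpos : ∀ x : Z, a * ‖x‖ ^ 2 ≤ ⟪x, P x⟫) (x : Z) :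
    nf P x ^ 2 = qf P x :=
  Real.sq_sqrt (qf_nonneg' ha hpos x)

lemma inner_le_nf (ha : 0 < a) (hpos : ∀ x : Z, a * ‖x‖ ^ 2 ≤ ⟪x, P x⟫)
    (hsa : ∀ x y : Z, (⟪P x, y⟫ : ℝ) = ⟪x, P y⟫) (x y : Z) :
    (⟪x, P y⟫ : ℝ) ≤ nf P x * nf P y := by
  nlinarith [qf_cs ha hpos hsa x y, nf_sq ha hpos x, nf_sq ha hpos y,
    nf_nonneg (P := P) x, nf_nonneg (P := P) y,
    mul_nonneg (nf_nonneg (P := P) x) (nf_nonneg (P := P) y)]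

lemma nf_add (ha : 0 < a) (hpos : ∀ x : Z, a * ‖x‖ ^ 2 ≤ ⟪x, P x⟫)
    (hsa : ∀ x y : Z, (⟪P x, y⟫ : ℝ) = ⟪x, P y⟫) (x y : Z) :
    nf P (x + y) ≤ nf P x + nf P y := by
  have h1 : qf P (x + y) ≤ (nf P x + nf P y) ^ 2 := by
    rw [qf_add hsa]
    nlinarith [inner_le_nf ha hpos hsa x y, nf_sq ha hpos x, nf_sq ha hpos y]
  calc nf P (x + y) ≤ Real.sqrt ((nf P x + nf P y) ^ 2) := Real.sqrt_le_sqrt h1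
    _ = nf P x + nf P y := Real.sqrt_sq (add_nonneg (nf_nonneg x) (nf_nonneg y))

lemma nf_smul (c : ℝ) (x : Z) : nf P (c • x) = |c| * nf P x := by
  rw [nf, qf_smul, Real.sqrt_mul (sq_nonneg c), Real.sqrt_sq_eq_abs]; rfl

lemma nf_le_of_qf_le (ha : 0 < a) (hpos : ∀ x : Z, a * ‖x‖ ^ 2 ≤ ⟪x, P x⟫)
    (x y : Z) (h : qf P x ≤ qf P y) : nf P x ≤ nf P y :=
  Real.sqrt_le_sqrt h

end PForm

section WeakCluster

variable {Z : Type*} [NormedAddCommGroup Z] [InnerProductSpace ℝ Z] [CompleteSpace Z]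

lemma exists_weak_cluster (z : ℕ → Z) (C : ℝ) (hC : ∀ i, ‖z i‖ ≤ C) (U : Ultrafilter ℕ) :
    ∃ zbar : Z, ∀ w : Z, Tendsto (fun i => (⟪z i, w⟫ : ℝ)) ↑U (nhds ⟪zbar, w⟫) := by
  have habs : ∀ (w : Z) (i : ℕ), |(⟪z i, w⟫ : ℝ)| ≤ C * ‖w‖ := by
    intro w i
    refine le_trans (abs_real_inner_le_norm (z i) w) ?_
    exact mul_le_mul_of_nonneg_right (hC i) (norm_nonneg w)
  have key : ∀ w : Z, ∃ L : ℝ, Tendsto (fun i => (⟪z i, w⟫ : ℝ)) ↑U (nhds L) := by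
    intro w
    have hmem : ∀ i, (⟪z i, w⟫ : ℝ) ∈ Set.Icc (-(C * ‖w‖)) (C * ‖w‖) := fun i =>
      abs_le.mp (habs w i)
    obtain ⟨L, -, hL⟩ := (isCompact_Icc (a := -(C * ‖w‖)) (b := C * ‖w‖)).ultrafilter_le_nhds
      (U.map fun i => (⟪z i, w⟫ : ℝ))
      (by rw [Ultrafilter.coe_map, le_principal_iff, Filter.mem_map]
          exact Filter.univ_mem' hmem)
    exact ⟨L, by rwa [Ultrafilter.coe_map] at hL⟩
  choose Lf hLf using key
  have hadd : ∀ w w', Lf (w + w') = Lf w + Lf w' := by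
    intro w w'
    refine tendsto_nhds_unique (hLf (w + w')) ?_
    have := (hLf w).add (hLf w')
    simpa only [inner_add_right] using this
  have hsmul : ∀ (c : ℝ) w, Lf (c • w) = c * Lf w := by
    intro c w
    refine tendsto_nhds_unique (hLf (c • w)) ?_
    have := (hLf w).const_mul c
    simpa only [real_inner_smul_right] using this
  have hbound : ∀ w, ‖Lf w‖ ≤ C * ‖w‖ := by
    intro w
    rw [Real.norm_eq_abs]
    exact le_of_tendsto (hLf w).abs (Filter.Eventually.of_forall (habs w))
  let ℓ : Z →L[ℝ] ℝ := LinearMap.mkContinuous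
    { toFun := Lf, map_add' := hadd, map_smul' := hsmul } C hbound
  refine ⟨(InnerProductSpace.toDual ℝ Z).symm ℓ, fun w => ?_⟩
  have : (⟪(InnerProductSpace.toDual ℝ Z).symm ℓ, w⟫ : ℝ) = ℓ w := by
    rw [← InnerProductSpace.toDual_apply_apply, LinearIsometryEquiv.apply_symm_apply]
  rw [this]
  exact hLf w

end WeakCluster

/-- **Convergence of the relaxed preconditioned proximal point algorithm.** Let `M` be
maximally monotone on `Z` with nonempty zero set and `P` self-adjoint strongly positive
bounded linear. For any `z 0` and any sequence `(ρ i)` in `[0, 2]` with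
`Σ_i ρ i (2 - ρ i) = +∞`, the iteration `z (i+1) = z i + ρ i • (J (z i) - z i)`, where
`J = (P⁻¹ M + Id)⁻¹` is the preconditioned resolvent (`P (z - J z) ∈ M (J z)` for all `z`),
converges weakly to a zero of `M`. -/
theorem preconditioned_proximal_point_convergence {Z : Type*} [NormedAddCommGroup Z]
    [InnerProductSpace ℝ Z] [CompleteSpace Z]
    (M : Z → Set Z) (hM : SetValuedMaximallyMonotone M)
    (hzero : ∃ z : Z, (0 : Z) ∈ M z)
    (P : Z →L[ℝ] Z) (hPsa : ∀ x y : Z, (⟪P x, y⟫ : ℝ) = ⟪x, P y⟫)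
    (hPpos : ∃ a : ℝ, 0 < a ∧ ∀ x : Z, a * ‖x‖ ^ 2 ≤ ⟪x, P x⟫)
    (J : Z → Z) (hJ : ∀ z : Z, P (z - J z) ∈ M (J z))
    (ρ : ℕ → ℝ) (hρ : ∀ i, ρ i ∈ Set.Icc (0 : ℝ) 2)
    (hdiv : ¬ Summable (fun i => ρ i * (2 - ρ i)))
    (z : ℕ → Z) (hrec : ∀ i, z (i + 1) = z i + ρ i • (J (z i) - z i)) :
    ∃ zstar : Z, (0 : Z) ∈ M zstar ∧
      ∀ w : Z, Tendsto (fun i => (⟪z i, w⟫ : ℝ)) atTop (nhds ⟪zstar, w⟫) := by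
  obtain ⟨a, ha, hap⟩ := hPpos
  obtain ⟨zs0, hzs0⟩ := hzero
  -- every zero of `M` is a fixed point of `J`
  have hfix : ∀ y : Z, (0 : Z) ∈ M y → J y = y := by
    intro y hy
    have h := hM.1 (hJ y) hy
    have h2 : (⟪J y - y, P (y - J y) - 0⟫ : ℝ) = -⟪y - J y, P (y - J y)⟫ := by
      rw [sub_zero, ← neg_sub y (J y), inner_neg_left]
    rw [h2] at h
    have h3 := hap (y - J y)
    have h4 : ‖y - J y‖ ^ 2 ≤ 0 := by nlinarith
    have h5 : ‖y - J y‖ = 0 := pow_eq_zero_iff two_ne_zero |>.mp (le_antisymm h4 (sq_nonneg _))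
    exact (sub_eq_zero.mp (norm_eq_zero.mp h5)).symm
  -- firm nonexpansiveness inequality
  have hfirm : ∀ x y : Z, 0 ≤ (⟪J x - J y, P ((x - J x) - (y - J y))⟫ : ℝ) := by
    intro x y
    have := hM.1 (hJ x) (hJ y)
    rwa [← map_sub] at this
  -- Fejér inequality
  have fejer : ∀ y : Z, (0 : Z) ∈ M y → ∀ i,
      qf P (z (i + 1) - y) ≤ qf P (z i - y) - ρ i * (2 - ρ i) * qf P (z i - J (z i)) := by
    intro y hy i
    have hJy := hfix y hy
    have hcross : 0 ≤ (⟪J (z i) - y, P (z i - J (z i))⟫ : ℝ) := by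
      have h := hfirm (z i) y
      rw [hJy] at h
      simpa using h
    have hz1 : z (i + 1) - y = (z i - y) - ρ i • (z i - J (z i)) := by
      rw [hrec i]; module
    have hq : qf P (z (i + 1) - y) = qf P (z i - y)
        - 2 * ρ i * ⟪z i - y, P (z i - J (z i))⟫ + ρ i ^ 2 * qf P (z i - J (z i)) := by
      rw [hz1, qf_sub hPsa, map_smul, inner_smul_right, qf_smul]
      ring
    have hsplit : (⟪z i - y, P (z i - J (z i))⟫ : ℝ)
        = qf P (z i - J (z i)) + ⟪J (z i) - y, P (z i - J (z i))⟫ := by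
      have hdecomp : z i - y = (z i - J (z i)) + (J (z i) - y) := by abel
      rw [hdecomp, inner_add_left, qf_apply]
    obtain ⟨hρ0, hρ2⟩ := hρ i
    nlinarith [mul_nonneg hρ0 hcross]
  -- antitone distances to zeros
  have qant : ∀ y : Z, (0 : Z) ∈ M y → Antitone fun i => qf P (z i - y) := by
    intro y hy
    apply antitone_nat_of_succ_le
    intro i
    have h := fejer y hy i
    obtain ⟨hρ0, hρ2⟩ := hρ i
    nlinarith [qf_nonneg' ha hap (z i - J (z i)),
      mul_nonneg (mul_nonneg hρ0 (by linarith : (0:ℝ) ≤ 2 - ρ i))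
        (qf_nonneg' ha hap (z i - J (z i)))]
  -- boundedness
  have hbound : ∀ i, ‖z i‖ ≤ ‖zs0‖ + Real.sqrt (qf P (z 0 - zs0) / a) := by
    intro i
    have h1 : qf P (z i - zs0) ≤ qf P (z 0 - zs0) := qant zs0 hzs0 (Nat.zero_le i)
    have h2 := hap (z i - zs0)
    rw [← qf_apply] at h2
    have h3 : ‖z i - zs0‖ ^ 2 ≤ qf P (z 0 - zs0) / a := by
      rw [le_div_iff₀ ha]; nlinarith
    have h4 : ‖z i - zs0‖ ≤ Real.sqrt (qf P (z 0 - zs0) / a) := by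
      rw [← Real.sqrt_sq (norm_nonneg (z i - zs0))]
      exact Real.sqrt_le_sqrt h3
    calc ‖z i‖ = ‖zs0 + (z i - zs0)‖ := by rw [add_sub_cancel]
      _ ≤ ‖zs0‖ + ‖z i - zs0‖ := norm_add_le _ _
      _ ≤ _ := by linarith
  -- summability of the residual weights
  have hs_nonneg : ∀ i, 0 ≤ ρ i * (2 - ρ i) * qf P (z i - J (z i)) := by
    intro i
    obtain ⟨hρ0, hρ2⟩ := hρ i
    exact mul_nonneg (mul_nonneg hρ0 (by linarith)) (qf_nonneg' ha hap _)
  have hsum : Summable fun i => ρ i * (2 - ρ i) * qf P (z i - J (z i)) := by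
    apply summable_of_sum_range_le hs_nonneg (c := qf P (z 0 - zs0))
    intro n
    have htel : ∑ i ∈ Finset.range n, ρ i * (2 - ρ i) * qf P (z i - J (z i))
        ≤ qf P (z 0 - zs0) - qf P (z n - zs0) := by
      induction n with
      | zero => simp
      | succ n ih =>
        rw [Finset.sum_range_succ]
        have := fejer zs0 hzs0 n
        linarith
    have := qf_nonneg' ha hap (z n - zs0)
    linarith
  -- nonexpansiveness of the reflection
  have hnonexp : ∀ x y : Z,
      qf P (((2:ℝ) • J x - x) - ((2:ℝ) • J y - y)) ≤ qf P (x - y) := by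
    intro x y
    have h1 := hfirm x y
    have expand : ((2:ℝ) • J x - x) - ((2:ℝ) • J y - y)
        = (2:ℝ) • (J x - J y) - (x - y) := by module
    have h2 : (⟪J x - J y, P ((x - J x) - (y - J y))⟫ : ℝ)
        = ⟪J x - J y, P (x - y)⟫ - qf P (J x - J y) := by
      have hdecomp : (x - J x) - (y - J y) = (x - y) - (J x - J y) := by abel
      rw [hdecomp, map_sub, inner_sub_right, qf_apply]
    rw [expand, qf_sub hPsa, qf_smul, real_inner_smul_left]
    nlinarith
  -- residual monotonicity
  have hd_mono : ∀ i, nf P (z (i + 1) - J (z (i + 1))) ≤ nf P (z i - J (z i)) := by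
    intro i
    obtain ⟨hρ0, hρ2⟩ := hρ i
    have h1 : z (i + 1) - ((2:ℝ) • J (z i) - z i)
        = (1 - ρ i / 2) • (z i - ((2:ℝ) • J (z i) - z i)) := by
      rw [hrec i]; module
    have h2 : z i - z (i + 1) = (ρ i / 2) • (z i - ((2:ℝ) • J (z i) - z i)) := by
      rw [hrec i]; module
    have habs1 : |1 - ρ i / 2| = 1 - ρ i / 2 := abs_of_nonneg (by linarith)
    have habs2 : |ρ i / 2| = ρ i / 2 := abs_of_nonneg (by linarith)
    have hzr1 : z i - ((2:ℝ) • J (z i) - z i) = (2:ℝ) • (z i - J (z i)) := by module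
    have hzr2 : z (i+1) - ((2:ℝ) • J (z (i+1)) - z (i+1))
        = (2:ℝ) • (z (i+1) - J (z (i+1))) := by module
    have key : nf P (z (i+1) - ((2:ℝ) • J (z (i+1)) - z (i+1)))
        ≤ nf P (z i - ((2:ℝ) • J (z i) - z i)) := by
      have t1 : z (i+1) - ((2:ℝ) • J (z (i+1)) - z (i+1))
          = (z (i+1) - ((2:ℝ) • J (z i) - z i))
            + (((2:ℝ) • J (z i) - z i) - ((2:ℝ) • J (z (i+1)) - z (i+1))) := by abel
      have step1 : nf P (z (i+1) - ((2:ℝ) • J (z (i+1)) - z (i+1)))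
          ≤ nf P (z (i+1) - ((2:ℝ) • J (z i) - z i))
            + nf P (((2:ℝ) • J (z i) - z i) - ((2:ℝ) • J (z (i+1)) - z (i+1))) := by
        rw [t1]; exact nf_add ha hap hPsa _ _
      have step2 : nf P (((2:ℝ) • J (z i) - z i) - ((2:ℝ) • J (z (i+1)) - z (i+1)))
          ≤ nf P (z i - z (i+1)) :=
        nf_le_of_qf_le ha hap _ _ (hnonexp (z i) (z (i+1)))
      have step3 : nf P (z (i+1) - ((2:ℝ) • J (z i) - z i))
          = (1 - ρ i / 2) * nf P (z i - ((2:ℝ) • J (z i) - z i)) := by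
        rw [h1, nf_smul, habs1]
      have step4 : nf P (z i - z (i+1))
          = (ρ i / 2) * nf P (z i - ((2:ℝ) • J (z i) - z i)) := by
        rw [h2, nf_smul, habs2]
      calc nf P (z (i+1) - ((2:ℝ) • J (z (i+1)) - z (i+1)))
          ≤ nf P (z (i+1) - ((2:ℝ) • J (z i) - z i)) + nf P (z i - z (i+1)) := by
            linarith
        _ = nf P (z i - ((2:ℝ) • J (z i) - z i)) := by rw [step3, step4]; ring
    rw [hzr1, hzr2, nf_smul, nf_smul] at key
    have : |(2:ℝ)| = 2 := by norm_num
    rw [this] at key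
    linarith
  -- residual tends to zero
  have hd_ant : Antitone fun i => nf P (z i - J (z i)) := antitone_nat_of_succ_le hd_mono
  have hd_bdd : BddBelow (Set.range fun i => nf P (z i - J (z i))) :=
    ⟨0, by rintro x ⟨i, rfl⟩; exact nf_nonneg _⟩
  have hinf_nonneg : 0 ≤ ⨅ i, nf P (z i - J (z i)) := le_ciInf fun i => nf_nonneg _
  have hinf_zero : (⨅ i, nf P (z i - J (z i))) = 0 := by
    by_contra hne
    have hpos' : 0 < ⨅ i, nf P (z i - J (z i)) := lt_of_le_of_ne hinf_nonneg (Ne.symm hne)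
    apply hdiv
    have hle : ∀ i, ρ i * (2 - ρ i)
        ≤ (ρ i * (2 - ρ i) * qf P (z i - J (z i))) / (⨅ i, nf P (z i - J (z i))) ^ 2 := by
      intro i
      obtain ⟨hρ0, hρ2⟩ := hρ i
      have hdi : (⨅ i, nf P (z i - J (z i))) ≤ nf P (z i - J (z i)) := ciInf_le hd_bdd i
      have hq : (⨅ i, nf P (z i - J (z i))) ^ 2 ≤ qf P (z i - J (z i)) := by
        rw [← nf_sq ha hap]
        nlinarith [nf_nonneg (P := P) (z i - J (z i))]
      rw [le_div_iff₀ (by positivity)]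
      have hρρ : 0 ≤ ρ i * (2 - ρ i) := mul_nonneg hρ0 (by linarith)
      nlinarith
    exact Summable.of_nonneg_of_le
      (fun i => mul_nonneg (hρ i).1 (by linarith [(hρ i).2]))
      hle (hsum.div_const _)
  have hd0 : Tendsto (fun i => nf P (z i - J (z i))) atTop (nhds 0) := by
    have := tendsto_atTop_ciInf hd_ant hd_bdd
    rwa [hinf_zero] at this
  -- strong convergence of the residual
  have he_bound : ∀ i, ‖z i - J (z i)‖ ≤ nf P (z i - J (z i)) / Real.sqrt a := by
    intro i
    have hsa' : (0:ℝ) < Real.sqrt a := Real.sqrt_pos.mpr ha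
    have h2 : a * ‖z i - J (z i)‖ ^ 2 ≤ nf P (z i - J (z i)) ^ 2 := by
      rw [nf_sq ha hap, qf_apply]; exact hap _
    rw [le_div_iff₀ hsa']
    nlinarith [Real.sq_sqrt ha.le, norm_nonneg (z i - J (z i)),
      nf_nonneg (P := P) (z i - J (z i)), Real.sqrt_nonneg a,
      mul_nonneg (norm_nonneg (z i - J (z i))) (Real.sqrt_nonneg a)]
  have he0 : Tendsto (fun i => ‖z i - J (z i)‖) atTop (nhds 0) := by
    apply squeeze_zero (fun i => norm_nonneg _) he_bound
    have := hd0.div_const (Real.sqrt a)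
    simpa using this
  -- demiclosedness: any ultrafilter weak cluster point is a zero
  have hC0 : (0:ℝ) ≤ ‖zs0‖ + Real.sqrt (qf P (z 0 - zs0) / a) :=
    le_trans (norm_nonneg (z 0)) (hbound 0)
  have hJb : ∀ i, ‖J (z i)‖
      ≤ (‖zs0‖ + Real.sqrt (qf P (z 0 - zs0) / a)) + nf P (z 0 - J (z 0)) / Real.sqrt a := by
    intro i
    have h1 : ‖J (z i)‖ ≤ ‖z i‖ + ‖z i - J (z i)‖ := by
      calc ‖J (z i)‖ = ‖z i - (z i - J (z i))‖ := by rw [sub_sub_cancel]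
        _ ≤ ‖z i‖ + ‖z i - J (z i)‖ := norm_sub_le _ _
    have h2 : ‖z i - J (z i)‖ ≤ nf P (z 0 - J (z 0)) / Real.sqrt a := by
      refine le_trans (he_bound i) ?_
      have hsa' : (0:ℝ) < Real.sqrt a := Real.sqrt_pos.mpr ha
      exact div_le_div_of_nonneg_right (hd_ant (Nat.zero_le i)) hsa'.le
    linarith [hbound i]
  have demiclosed : ∀ V : Ultrafilter ℕ, ↑V ≤ (atTop : Filter ℕ) → ∀ zb : Z,
      (∀ w : Z, Tendsto (fun i => (⟪z i, w⟫ : ℝ)) ↑V (nhds ⟪zb, w⟫)) → (0 : Z) ∈ M zb := by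
    intro V hV zb hzb
    classical
    have hkey : ∀ x u : Z, u ∈ M x → 0 ≤ (⟪zb - x, (0 : Z) - u⟫ : ℝ) := by
      intro x u hu
      have hmono : ∀ i, 0 ≤ (⟪J (z i) - x, P (z i - J (z i)) - u⟫ : ℝ) := fun i =>
        hM.1 (hJ (z i)) hu
      have t1 : Tendsto (fun i => (⟪J (z i) - x, P (z i - J (z i))⟫ : ℝ)) atTop (nhds 0) := by
        apply squeeze_zero_norm
          (a := fun i => (((‖zs0‖ + Real.sqrt (qf P (z 0 - zs0) / a))
            + nf P (z 0 - J (z 0)) / Real.sqrt a + ‖x‖) * ‖P‖) * ‖z i - J (z i)‖)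
        · intro i
          have hb1 : ‖J (z i) - x‖ ≤ (‖zs0‖ + Real.sqrt (qf P (z 0 - zs0) / a))
              + nf P (z 0 - J (z 0)) / Real.sqrt a + ‖x‖ := by
            have := norm_sub_le (J (z i)) x
            have := hJb i
            linarith
          calc ‖(⟪J (z i) - x, P (z i - J (z i))⟫ : ℝ)‖
              ≤ ‖J (z i) - x‖ * ‖P (z i - J (z i))‖ := norm_inner_le_norm _ _
            _ ≤ ((‖zs0‖ + Real.sqrt (qf P (z 0 - zs0) / a))
                  + nf P (z 0 - J (z 0)) / Real.sqrt a + ‖x‖) * (‖P‖ * ‖z i - J (z i)‖) := by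
                have hP := P.le_opNorm (z i - J (z i))
                have h0 : (0 : ℝ) ≤ ‖J (z i) - x‖ := norm_nonneg _
                have h1 : (0 : ℝ) ≤ ‖P (z i - J (z i))‖ := norm_nonneg _
                have h2 : (0 : ℝ) ≤ (‖zs0‖ + Real.sqrt (qf P (z 0 - zs0) / a))
                    + nf P (z 0 - J (z 0)) / Real.sqrt a + ‖x‖ := le_trans h0 hb1
                nlinarith
            _ = (((‖zs0‖ + Real.sqrt (qf P (z 0 - zs0) / a))
                  + nf P (z 0 - J (z 0)) / Real.sqrt a + ‖x‖) * ‖P‖) * ‖z i - J (z i)‖ := by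
                ring
        · have := he0.const_mul ((((‖zs0‖ + Real.sqrt (qf P (z 0 - zs0) / a))
            + nf P (z 0 - J (z 0)) / Real.sqrt a + ‖x‖) * ‖P‖))
          simpa using this
      have ha2 : Tendsto (fun i => (⟪z i - J (z i), u⟫ : ℝ)) ↑V (nhds 0) := by
        refine Tendsto.mono_left ?_ hV
        apply squeeze_zero_norm (a := fun i => ‖u‖ * ‖z i - J (z i)‖)
        · intro i
          calc ‖(⟪z i - J (z i), u⟫ : ℝ)‖ ≤ ‖z i - J (z i)‖ * ‖u‖ := norm_inner_le_norm _ _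
            _ = ‖u‖ * ‖z i - J (z i)‖ := by ring
        · simpa using he0.const_mul ‖u‖
      have t2 : Tendsto (fun i => (⟪J (z i) - x, u⟫ : ℝ)) ↑V (nhds ⟪zb - x, u⟫) := by
        have hfun : (fun i => (⟪J (z i) - x, u⟫ : ℝ))
            = fun i => ⟪z i, u⟫ - ⟪z i - J (z i), u⟫ - ⟪x, u⟫ := by
          funext i
          rw [← inner_sub_left, ← inner_sub_left]
          congr 1
          abel
        rw [hfun]
        have := ((hzb u).sub ha2).sub (tendsto_const_nhds (x := (⟪x, u⟫ : ℝ)))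
        have heq : (⟪zb, u⟫ : ℝ) - 0 - ⟪x, u⟫ = ⟪zb - x, u⟫ := by
          rw [inner_sub_left]; ring
        rwa [heq] at this
      have t3 : Tendsto (fun i => (⟪J (z i) - x, P (z i - J (z i)) - u⟫ : ℝ)) ↑V
          (nhds (0 - ⟪zb - x, u⟫)) := by
        have := (t1.mono_left hV).sub t2
        simpa only [inner_sub_right] using this
      have h0 : (0 : ℝ) ≤ 0 - ⟪zb - x, u⟫ :=
        ge_of_tendsto t3 (Filter.Eventually.of_forall hmono)
      have : (⟪zb - x, (0 : Z) - u⟫ : ℝ) = 0 - ⟪zb - x, u⟫ := by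
        rw [inner_sub_right, inner_zero_right]
      linarith [this ▸ h0, this]
    set Nop : Z → Set Z := fun y => if y = zb then insert (0 : Z) (M y) else M y with hNop
    have hsub : ∀ y, M y ⊆ Nop y := by
      intro y v hv
      by_cases h : y = zb
      · simp only [hNop, if_pos h]; exact Set.mem_insert_of_mem _ hv
      · simpa only [hNop, if_neg h] using hv
    have hmem : ∀ y v, v ∈ Nop y → v ∈ M y ∨ (y = zb ∧ v = 0) := by
      intro y v hv
      by_cases h : y = zb
      · simp only [hNop, if_pos h, Set.mem_insert_iff] at hv
        rcases hv with rfl | hv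
        · exact Or.inr ⟨h, rfl⟩
        · exact Or.inl hv
      · simp only [hNop, if_neg h] at hv
        exact Or.inl hv
    have hmono : SetValuedMonotone Nop := by
      intro x x' u u' hu hu'
      rcases hmem x u hu with hu1 | ⟨hx1, hu1⟩ <;> rcases hmem x' u' hu' with hu2 | ⟨hx2, hu2⟩
      · exact hM.1 hu1 hu2
      · rw [hx2, hu2]
        have := hkey x u hu1
        rw [show x - zb = -(zb - x) from by abel, show u - (0:Z) = -((0:Z) - u) from by abel,
          inner_neg_neg]
        exact this
      · rw [hx1, hu1]
        exact hkey x' u' hu2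
      · rw [hx1, hx2, hu1, hu2]
        simp
    have h0mem : (0 : Z) ∈ Nop zb := by
      simp only [hNop, if_pos rfl]
      exact Set.mem_insert _ _
    exact hM.2 Nop hmono hsub zb h0mem
  -- limits of P-distances to zeros
  have qlim : ∀ y : Z, (0 : Z) ∈ M y →
      ∃ L : ℝ, Tendsto (fun i => qf P (z i - y)) atTop (nhds L) := by
    intro y hy
    exact ⟨_, tendsto_atTop_ciInf (qant y hy)
      ⟨0, by rintro x ⟨i, rfl⟩; exact qf_nonneg' ha hap _⟩⟩
  -- uniqueness of ultrafilter weak cluster points among zeros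
  have huniq : ∀ (z1 z2 : Z) (V1 V2 : Ultrafilter ℕ), ↑V1 ≤ (atTop : Filter ℕ) →
      ↑V2 ≤ (atTop : Filter ℕ) → (0 : Z) ∈ M z1 → (0 : Z) ∈ M z2 →
      (∀ w, Tendsto (fun i => (⟪z i, w⟫ : ℝ)) ↑V1 (nhds ⟪z1, w⟫)) →
      (∀ w, Tendsto (fun i => (⟪z i, w⟫ : ℝ)) ↑V2 (nhds ⟪z2, w⟫)) → z1 = z2 := by
    intro z1 z2 V1 V2 hV1 hV2 h01 h02 hw1 hw2
    obtain ⟨L1, hL1⟩ := qlim z1 h01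
    obtain ⟨L2, hL2⟩ := qlim z2 h02
    have hident : ∀ i, (⟪z i, P (z1 - z2)⟫ : ℝ)
        = (qf P (z i - z2) - qf P (z i - z1) + qf P z1 - qf P z2) / 2 := by
      intro i
      have e1 := qf_sub hPsa (z i) z1
      have e2 := qf_sub hPsa (z i) z2
      have e3 : (⟪z i, P (z1 - z2)⟫ : ℝ) = ⟪z i, P z1⟫ - ⟪z i, P z2⟫ := by
        rw [map_sub, inner_sub_right]
      linarith
    have hlim : Tendsto (fun i => (⟪z i, P (z1 - z2)⟫ : ℝ)) atTop
        (nhds ((L2 - L1 + qf P z1 - qf P z2) / 2)) := by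
      simp only [hident]
      exact (((hL2.sub hL1).add_const (qf P z1)).sub_const (qf P z2)).div_const 2
    have k1 : (⟪z1, P (z1 - z2)⟫ : ℝ) = (L2 - L1 + qf P z1 - qf P z2) / 2 :=
      tendsto_nhds_unique (hw1 (P (z1 - z2))) (hlim.mono_left hV1)
    have k2 : (⟪z2, P (z1 - z2)⟫ : ℝ) = (L2 - L1 + qf P z1 - qf P z2) / 2 :=
      tendsto_nhds_unique (hw2 (P (z1 - z2))) (hlim.mono_left hV2)
    have hz12 : (⟪z1 - z2, P (z1 - z2)⟫ : ℝ) = 0 := by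
      rw [inner_sub_left, k1, k2]; ring
    have h3 := hap (z1 - z2)
    have h4 : ‖z1 - z2‖ ^ 2 ≤ 0 := by nlinarith
    have h5 : ‖z1 - z2‖ = 0 := pow_eq_zero_iff two_ne_zero |>.mp (le_antisymm h4 (sq_nonneg _))
    exact sub_eq_zero.mp (norm_eq_zero.mp h5)
  -- conclusion
  obtain ⟨U0, hU0⟩ := Ultrafilter.exists_le (atTop : Filter ℕ)
  obtain ⟨zbar, hzbar⟩ := exists_weak_cluster z _ hbound U0
  have hz0 : (0 : Z) ∈ M zbar := demiclosed U0 hU0 zbar hzbar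
  refine ⟨zbar, hz0, fun w => ?_⟩
  rw [tendsto_iff_ultrafilter]
  intro V hV
  obtain ⟨zV, hzV⟩ := exists_weak_cluster z _ hbound V
  have hzV0 : (0 : Z) ∈ M zV := demiclosed V hV zV hzV
  have heq : zbar = zV := huniq zbar zV U0 V hU0 hV hz0 hzV0 hzbar hzV
  rw [heq]
  exact hzV w
end

section
/- Let M be maximally monotone on Z and C z = Qz + c with Q self-adjoint positive bounded nonzero, ξ = 1/‖Q‖, and suppose the zero set of M + C is nonempty. For γ ∈ (0, ξ) and any sequence (ρ⁽ⁱ⁾) in [0,2] with Σᵢ ρ⁽ⁱ⁾(2 − ρ⁽ⁱ⁾) = +∞, the relaxed forward–backward iteration z⁽ⁱ⁺½⁾ = J_{γM}(z⁽ⁱ⁾ − γC z⁽ⁱ⁾), z⁽ⁱ⁺¹⁾ = z⁽ⁱ⁾ + ρ⁽ⁱ⁾(z⁽ⁱ⁺½⁾ − z⁽ⁱ⁾) converges weakly to a zero of M + C. -/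
open RealInnerProductSpace Filter

set_option maxHeartbeats 2000000 in
private lemma km_core {Z : Type*} [NormedAddCommGroup Z] [InnerProductSpace ℝ Z] [CompleteSpace Z]
    (P : Z →L[ℝ] Z) (hPsa : ∀ x y : Z, (⟪P x, y⟫ : ℝ) = ⟪x, P y⟫)
    (δ : ℝ) (hδ : 0 < δ)
    (hPlow : ∀ x : Z, δ * ‖x‖ ^ 2 ≤ ⟪x, P x⟫)
    (hPup : ∀ x : Z, (⟪x, P x⟫ : ℝ) ≤ ‖x‖ ^ 2)
    (T : Z → Z)
    (hfirm : ∀ x y : Z, (⟪T x - T y, P (T x - T y)⟫ : ℝ) ≤ ⟪T x - T y, P (x - y)⟫)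
    (f₀ : Z) (hf₀ : T f₀ = f₀)
    (ρ : ℕ → ℝ) (hρ : ∀ i, ρ i ∈ Set.Icc (0 : ℝ) 2)
    (hdiv : ¬ Summable (fun i => ρ i * (2 - ρ i)))
    (z : ℕ → Z) (hrec : ∀ i, z (i + 1) = z i + ρ i • (T (z i) - z i)) :
    ∃ zs : Z, T zs = zs ∧ ∀ w : Z, Tendsto (fun i => (⟪z i, w⟫ : ℝ)) atTop (nhds ⟪zs, w⟫) := by
  set E : Z → Z → ℝ := fun x y => ⟪x, P y⟫ with hEdef
  set N : Z → ℝ := fun x => ⟪x, P x⟫ with hNdef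
  -- symmetry
  have hEsymm : ∀ x y : Z, E x y = E y x := by
    intro x y
    simp only [hEdef]
    rw [← hPsa, real_inner_comm]
  -- bilinearity pieces
  have hEaddL : ∀ x y u : Z, E (x + y) u = E x u + E y u := by
    intro x y u; simp [hEdef, inner_add_left]
  have hEsubL : ∀ x y u : Z, E (x - y) u = E x u - E y u := by
    intro x y u; simp [hEdef, inner_sub_left]
  have hEsmulL : ∀ (a : ℝ) (x u : Z), E (a • x) u = a * E x u := by
    intro a x u; simp [hEdef, real_inner_smul_left]
  have hEsubR : ∀ x y u : Z, E x (y - u) = E x y - E x u := by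
    intro x y u; simp [hEdef, inner_sub_right]
  have hEaddR : ∀ x y u : Z, E x (y + u) = E x y + E x u := by
    intro x y u; simp [hEdef, inner_add_right]
  have hEsmulR : ∀ (a : ℝ) (x u : Z), E x (a • u) = a * E x u := by
    intro a x u; simp [hEdef, real_inner_smul_right]
  -- expansions
  have hNadd : ∀ x y : Z, N (x + y) = N x + 2 * E x y + N y := by
    intro x y
    have h : E y x = E x y := hEsymm y x
    simp only [hNdef, hEdef] at *
    simp only [map_add, inner_add_left, inner_add_right]
    linarith
  have hNsub : ∀ x y : Z, N (x - y) = N x - 2 * E x y + N y := by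
    intro x y
    have h : E y x = E x y := hEsymm y x
    simp only [hNdef, hEdef] at *
    simp only [map_sub, inner_sub_left, inner_sub_right]
    linarith
  have hNsmul : ∀ (a : ℝ) (x : Z), N (a • x) = a ^ 2 * N x := by
    intro a x
    simp only [hNdef, map_smul, real_inner_smul_left, real_inner_smul_right]
    ring
  have hNnn : ∀ x : Z, 0 ≤ N x := by
    intro x
    exact le_trans (by positivity) (hPlow x)
  have hNzero : ∀ x : Z, N x = 0 → x = 0 := by
    intro x hx
    simp only [hNdef] at hx
    have h1 := hPlow x
    rw [hx] at h1
    have h2 : ‖x‖ ^ 2 ≤ 0 := by nlinarith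
    have h3 : ‖x‖ = 0 := by nlinarith [sq_nonneg ‖x‖, norm_nonneg x]
    simpa using h3
  -- Cauchy-Schwarz
  have hCS : ∀ x y : Z, (E x y) ^ 2 ≤ N x * N y := by
    intro x y
    rcases eq_or_lt_of_le (hNnn x) with h0 | h0
    · have hx0 : x = 0 := hNzero x h0.symm
      subst hx0
      have h1 : E 0 y = 0 := by simp [hEdef]
      have h2 : N (0 : Z) = 0 := by simp [hNdef]
      rw [h1, h2]
      simp
    · have h := hNnn (N x • y - E x y • x)
      rw [hNsub, hNsmul, hNsmul, hEsmulL, hEsmulR] at h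
      have hsym : E y x = E x y := hEsymm y x
      rw [hsym] at h
      nlinarith [h, h0]
  -- sqrt-norm
  set nE : Z → ℝ := fun x => Real.sqrt (N x) with hnEdef
  have hnE_nonneg : ∀ x, 0 ≤ nE x := fun x => Real.sqrt_nonneg _
  have hnE_sq : ∀ x, nE x ^ 2 = N x := by
    intro x; simp [hnEdef, Real.sq_sqrt (hNnn x)]
  have habs : ∀ x y : Z, |E x y| ≤ nE x * nE y := by
    intro x y
    have h1 : |E x y| = Real.sqrt ((E x y) ^ 2) := (Real.sqrt_sq_eq_abs _).symm
    rw [h1, hnEdef]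
    rw [← Real.sqrt_mul (hNnn x)]
    exact Real.sqrt_le_sqrt (hCS x y)
  have hnE_mono : ∀ x y : Z, N x ≤ N y → nE x ≤ nE y := by
    intro x y h; exact Real.sqrt_le_sqrt h
  have htriangle : ∀ x y : Z, nE (x + y) ≤ nE x + nE y := by
    intro x y
    have h1 : N (x + y) ≤ (nE x + nE y) ^ 2 := by
      rw [hNadd]
      have := habs x y
      nlinarith [hnE_sq x, hnE_sq y, abs_nonneg (E x y), le_abs_self (E x y)]
    calc nE (x + y) ≤ Real.sqrt ((nE x + nE y) ^ 2) := Real.sqrt_le_sqrt h1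
    _ = nE x + nE y := Real.sqrt_sq (by positivity)
  have hnEsmul : ∀ (a : ℝ) (x : Z), nE (a • x) = |a| * nE x := by
    intro a x
    rw [hnEdef]
    simp only [hNsmul]
    rw [Real.sqrt_mul (sq_nonneg a), Real.sqrt_sq_eq_abs]
  -- firm nonexpansiveness restated
  have hfirm' : ∀ x y : Z, N (T x - T y) ≤ E (T x - T y) (x - y) := hfirm
  have hTnonexp : ∀ x y : Z, N (T x - T y) ≤ N (x - y) := by
    intro x y
    have h1 := hfirm' x y
    have h2 := hCS (T x - T y) (x - y)
    nlinarith [hNnn (T x - T y), hNnn (x - y)]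
  -- key inequality
  have hkey : ∀ f : Z, T f = f → ∀ i,
      N (z (i + 1) - f) ≤ N (z i - f) - ρ i * (2 - ρ i) * N (z i - T (z i)) := by
    intro f hf i
    have hexpand : ∀ (r : ℝ) (d e : Z), N (d + r • (e - d))
        = N d + 2 * (r * (E d e - N d)) + r ^ 2 * (N e - 2 * E d e + N d) := by
      intro r d e
      rw [hNadd, hNsmul, hEsmulR, hEsubR]
      have h1 : E d d = N d := rfl
      have h2 : N (e - d) = N e - 2 * E e d + N d := hNsub e d
      have h3 : E e d = E d e := hEsymm e d
      rw [h1, h2, h3]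
      try ring
    have hzi : z (i + 1) - f = (z i - f) + ρ i • ((T (z i) - f) - (z i - f)) := by
      rw [hrec i]
      have h : (T (z i) - f) - (z i - f) = T (z i) - z i := by abel
      rw [h]
      abel
    have hde : z i - T (z i) = (z i - f) - (T (z i) - f) := by abel
    have e1 : N (z (i + 1) - f) = N (z i - f)
        + 2 * (ρ i * (E (z i - f) (T (z i) - f) - N (z i - f)))
        + ρ i ^ 2 * (N (T (z i) - f) - 2 * E (z i - f) (T (z i) - f) + N (z i - f)) := by
      rw [hzi, hexpand]
    have e2 : N (z i - T (z i)) = N (z i - f)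
        - 2 * E (z i - f) (T (z i) - f) + N (T (z i) - f) := by
      rw [hde]; exact hNsub _ _
    rw [e1, e2]
    have hfirmi : N (T (z i) - f) ≤ E (T (z i) - f) (z i - f) := by
      have h := hfirm' (z i) f
      rw [hf] at h
      exact h
    have hsym : E (z i - f) (T (z i) - f) = E (T (z i) - f) (z i - f) := hEsymm _ _
    have hprod : 0 ≤ ρ i * (E (z i - f) (T (z i) - f) - N (T (z i) - f)) :=
      mul_nonneg (hρ i).1 (by rw [hsym]; linarith)
    nlinarith [hprod]

  -- Fejér monotonicity
  have hfejer : ∀ f : Z, T f = f → Antitone (fun n => N (z n - f)) := by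
    intro f hf
    apply antitone_nat_of_succ_le
    intro n
    have h1 := hkey f hf n
    have h2 : 0 ≤ ρ n * (2 - ρ n) * N (z n - T (z n)) := by
      have := hρ n
      have := hNnn (z n - T (z n))
      have h3 : 0 ≤ ρ n * (2 - ρ n) := by nlinarith [(hρ n).1, (hρ n).2]
      positivity
    linarith
  have hNconv : ∀ f : Z, T f = f →
      Tendsto (fun n => N (z n - f)) atTop (nhds (⨅ n, N (z n - f))) := by
    intro f hf
    exact tendsto_atTop_ciInf (hfejer f hf)
      ⟨0, by rintro x ⟨n, rfl⟩; exact hNnn _⟩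
  -- boundedness
  set K : ℝ := N (z 0 - f₀) with hKdef
  have hKbound : ∀ n, N (z n - f₀) ≤ K := by
    intro n
    exact hfejer f₀ hf₀ (Nat.zero_le n)
  set B : ℝ := ‖f₀‖ + Real.sqrt (K / δ) with hBdef
  have hB : ∀ n, ‖z n‖ ≤ B := by
    intro n
    have h1 : δ * ‖z n - f₀‖ ^ 2 ≤ K := le_trans (hPlow _) (hKbound n)
    have h2 : ‖z n - f₀‖ ^ 2 ≤ K / δ := by
      rw [le_div_iff₀ hδ]
      linarith [h1, mul_comm δ (‖z n - f₀‖ ^ 2)]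
    have h3 : ‖z n - f₀‖ ≤ Real.sqrt (K / δ) := by
      rw [← Real.sqrt_sq (norm_nonneg (z n - f₀))]
      exact Real.sqrt_le_sqrt h2
    have h4 : z n = f₀ + (z n - f₀) := by abel
    calc ‖z n‖ = ‖f₀ + (z n - f₀)‖ := by rw [← h4]
    _ ≤ ‖f₀‖ + ‖z n - f₀‖ := norm_add_le _ _
    _ ≤ B := by rw [hBdef]; linarith
  have hBnn : 0 ≤ B := le_trans (norm_nonneg _) (hB 0)
  -- asymptotic regularity
  set s : ℕ → ℝ := fun n => N (z n - T (z n)) with hsdef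
  have hs_nonneg : ∀ n, 0 ≤ s n := fun n => hNnn _
  have hs_anti : Antitone s := by
    set R : Z → Z := fun x => (2 : ℝ) • T x - x with hRdef
    have hRnon : ∀ x y : Z, N (R x - R y) ≤ N (x - y) := by
      intro x y
      have h1 : R x - R y = (2 : ℝ) • (T x - T y) - (x - y) := by
        simp only [hRdef]; module
      rw [h1, hNsub, hNsmul, hEsmulL]
      have h2 := hfirm' x y
      nlinarith [h2]
    have hr : ∀ m, z m - R (z m) = (2 : ℝ) • (z m - T (z m)) := by
      intro m; simp only [hRdef]; module
    have hnEr : ∀ m, nE (z m - R (z m)) = 2 * nE (z m - T (z m)) := by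
      intro m
      rw [hr, hnEsmul]
      norm_num
    apply antitone_nat_of_succ_le
    intro n
    set lam : ℝ := ρ n / 2 with hlamdef
    have hlam0 : 0 ≤ lam := by rw [hlamdef]; linarith [(hρ n).1]
    have hlam1 : lam ≤ 1 := by rw [hlamdef]; linarith [(hρ n).2]
    have hstep : z (n + 1) = z n + lam • (R (z n) - z n) := by
      have h1 : R (z n) - z n = (2 : ℝ) • (T (z n) - z n) := by
        simp only [hRdef]; module
      rw [h1, smul_smul, hrec n]
      norm_num [hlamdef]
    have hrid : z (n + 1) - R (z (n + 1))
        = (1 - lam) • (z n - R (z n)) + (R (z n) - R (z (n + 1))) := by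
      rw [hstep]; module
    have h1 : nE (z (n + 1) - R (z (n + 1)))
        ≤ nE ((1 - lam) • (z n - R (z n))) + nE (R (z n) - R (z (n + 1))) := by
      rw [hrid]; exact htriangle _ _
    have h2 : nE ((1 - lam) • (z n - R (z n))) = (1 - lam) * nE (z n - R (z n)) := by
      rw [hnEsmul, abs_of_nonneg (by linarith)]
    have h3 : nE (R (z n) - R (z (n + 1))) ≤ nE (z n - z (n + 1)) :=
      hnE_mono _ _ (hRnon _ _)
    have h4 : z n - z (n + 1) = lam • (z n - R (z n)) := by
      rw [hstep]; module
    have h5 : nE (z n - z (n + 1)) = lam * nE (z n - R (z n)) := by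
      rw [h4, hnEsmul, abs_of_nonneg hlam0]
    have h6 : nE (z (n + 1) - R (z (n + 1))) ≤ nE (z n - R (z n)) := by
      have := hnE_nonneg (z n - R (z n))
      nlinarith [h1, h2, h3, h5]
    rw [hnEr, hnEr] at h6
    have h7 : nE (z (n + 1) - T (z (n + 1))) ≤ nE (z n - T (z n)) := by linarith
    have h8 : s (n + 1) = nE (z (n + 1) - T (z (n + 1))) ^ 2 := (hnE_sq _).symm
    have h9 : s n = nE (z n - T (z n)) ^ 2 := (hnE_sq _).symm
    rw [h8, h9]
    exact pow_le_pow_left₀ (hnE_nonneg _) h7 2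
  have hs0 : Tendsto s atTop (nhds 0) := by
    have hbdd : BddBelow (Set.range s) := ⟨0, by rintro x ⟨n, rfl⟩; exact hs_nonneg n⟩
    have htend := tendsto_atTop_ciInf hs_anti hbdd
    have hinf0 : (⨅ n, s n) = 0 := by
      refine le_antisymm ?_ (le_ciInf hs_nonneg)
      by_contra hpos
      push_neg at hpos
      have hσ : ∀ n, (⨅ m, s m) ≤ s n := fun n => ciInf_le hbdd n
      have hps : ∀ n, ∑ i ∈ Finset.range n, ρ i * (2 - ρ i) * s i ≤ K - N (z n - f₀) := by
        intro n
        induction n with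
        | zero => simp [hKdef]
        | succ n ih =>
          rw [Finset.sum_range_succ]
          have hk := hkey f₀ hf₀ n
          have : ρ n * (2 - ρ n) * s n ≤ N (z n - f₀) - N (z (n + 1) - f₀) := by
            simp only [hsdef]; linarith
          linarith
      have hsum_le : ∀ n, ∑ i ∈ Finset.range n, ρ i * (2 - ρ i) ≤ K / (⨅ m, s m) := by
        intro n
        have h1 : (⨅ m, s m) * ∑ i ∈ Finset.range n, ρ i * (2 - ρ i)
            ≤ ∑ i ∈ Finset.range n, ρ i * (2 - ρ i) * s i := by
          rw [Finset.mul_sum]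
          apply Finset.sum_le_sum
          intro i _
          have hρi : 0 ≤ ρ i * (2 - ρ i) := by nlinarith [(hρ i).1, (hρ i).2]
          calc (⨅ m, s m) * (ρ i * (2 - ρ i)) = ρ i * (2 - ρ i) * (⨅ m, s m) := by ring
          _ ≤ ρ i * (2 - ρ i) * s i := mul_le_mul_of_nonneg_left (hσ i) hρi
        have h2 : 0 ≤ N (z n - f₀) := hNnn _
        rw [le_div_iff₀ hpos]
        calc (∑ i ∈ Finset.range n, ρ i * (2 - ρ i)) * (⨅ m, s m)
            = (⨅ m, s m) * ∑ i ∈ Finset.range n, ρ i * (2 - ρ i) := by ring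
        _ ≤ ∑ i ∈ Finset.range n, ρ i * (2 - ρ i) * s i := h1
        _ ≤ K := by linarith [hps n]
      exact hdiv (summable_of_sum_range_le
        (fun i => by nlinarith [(hρ i).1, (hρ i).2]) hsum_le)
    rwa [hinf0] at htend
  -- ultrafilter weak limits
  have hinner_bdd : ∀ (w : Z) (n : ℕ), |(⟪z n, w⟫ : ℝ)| ≤ B * ‖w‖ := by
    intro w n
    calc |(⟪z n, w⟫ : ℝ)| ≤ ‖z n‖ * ‖w‖ := abs_real_inner_le_norm _ _
    _ ≤ B * ‖w‖ := by
        have := hB n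
        have := norm_nonneg w
        nlinarith
  have key_ultra : ∀ U : Ultrafilter ℕ, ↑U ≤ (atTop : Filter ℕ) →
      ∃ zu : Z, T zu = zu ∧ ∀ w : Z, Tendsto (fun n => (⟪z n, w⟫ : ℝ)) ↑U (nhds ⟪zu, w⟫) := by
    intro U hU
    have hlim : ∀ w : Z, ∃ L : ℝ, Tendsto (fun n => (⟪z n, w⟫ : ℝ)) ↑U (nhds L) := by
      intro w
      have hcpt : IsCompact (Set.Icc (-(B * ‖w‖)) (B * ‖w‖)) := isCompact_Icc
      have hmem : ↑(U.map fun n => (⟪z n, w⟫ : ℝ))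
          ≤ Filter.principal (Set.Icc (-(B * ‖w‖)) (B * ‖w‖)) := by
        rw [Ultrafilter.coe_map, Filter.le_principal_iff, Filter.mem_map]
        apply Filter.univ_mem'
        intro n
        exact abs_le.mp (hinner_bdd w n)
      obtain ⟨a, _, ha⟩ := hcpt.ultrafilter_le_nhds _ hmem
      rw [Ultrafilter.coe_map] at ha
      exact ⟨a, ha⟩
    choose L hL using hlim
    have hLadd : ∀ w w' : Z, L (w + w') = L w + L w' := by
      intro w w'
      refine tendsto_nhds_unique (hL (w + w')) ?_
      have h1 : (fun n => (⟪z n, w + w'⟫ : ℝ)) = fun n => (⟪z n, w⟫ : ℝ) + ⟪z n, w'⟫ := by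
        funext n; rw [inner_add_right]
      rw [h1]
      exact (hL w).add (hL w')
    have hLsmul : ∀ (a : ℝ) (w : Z), L (a • w) = a * L w := by
      intro a w
      refine tendsto_nhds_unique (hL (a • w)) ?_
      have h1 : (fun n => (⟪z n, a • w⟫ : ℝ)) = fun n => a * ⟪z n, w⟫ := by
        funext n; rw [real_inner_smul_right]
      rw [h1]
      exact (hL w).const_mul a
    have hLbound : ∀ w : Z, ‖L w‖ ≤ B * ‖w‖ := by
      intro w
      rw [Real.norm_eq_abs]
      exact le_of_tendsto (hL w).abs (Filter.Eventually.of_forall (hinner_bdd w))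
    set φ : Z →L[ℝ] ℝ := LinearMap.mkContinuous
      { toFun := L, map_add' := hLadd, map_smul' := hLsmul } B hLbound with hφdef
    set zu := (InnerProductSpace.toDual ℝ Z).symm φ with hzudef
    have hzuw : ∀ w : Z, (⟪zu, w⟫ : ℝ) = L w := by
      intro w
      rw [hzudef]
      exact InnerProductSpace.toDual_symm_apply
    have hweak : ∀ w : Z, Tendsto (fun n => (⟪z n, w⟫ : ℝ)) ↑U (nhds ⟪zu, w⟫) := by
      intro w; rw [hzuw w]; exact hL w
    have hfixu : T zu = zu := by
      set v : Z := zu - T zu with hvdef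
      have hKz : ∀ n, N (z n - zu) ≤ (B + ‖zu‖) ^ 2 := by
        intro n
        calc N (z n - zu) ≤ ‖z n - zu‖ ^ 2 := hPup _
        _ ≤ (B + ‖zu‖) ^ 2 := by
            have h1 : ‖z n - zu‖ ≤ ‖z n‖ + ‖zu‖ := norm_sub_le _ _
            nlinarith [hB n, norm_nonneg (z n - zu), norm_nonneg zu, norm_nonneg (z n)]
      have hineq : ∀ n, 2 * E (z n - zu) v + N v
          ≤ s n + 2 * (Real.sqrt (s n) * Real.sqrt ((B + ‖zu‖) ^ 2)) := by
        intro n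
        have hA1 : N (z n - T zu) = N (z n - zu) + 2 * E (z n - zu) v + N v := by
          have h : z n - T zu = (z n - zu) + v := by rw [hvdef]; abel
          rw [h, hNadd]
        have hA2 : N (z n - T zu)
            = s n + 2 * E (z n - T (z n)) (T (z n) - T zu) + N (T (z n) - T zu) := by
          have h : z n - T zu = (z n - T (z n)) + (T (z n) - T zu) := by abel
          rw [h, hNadd]
        have hA3 : N (T (z n) - T zu) ≤ N (z n - zu) := hTnonexp _ _
        have hsq1 : nE (z n - T (z n)) = Real.sqrt (s n) := rfl
        have hsq2 : nE (T (z n) - T zu) ≤ Real.sqrt ((B + ‖zu‖) ^ 2) :=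
          Real.sqrt_le_sqrt (le_trans hA3 (hKz n))
        have hA4 : E (z n - T (z n)) (T (z n) - T zu)
            ≤ Real.sqrt (s n) * Real.sqrt ((B + ‖zu‖) ^ 2) := by
          calc E (z n - T (z n)) (T (z n) - T zu)
              ≤ |E (z n - T (z n)) (T (z n) - T zu)| := le_abs_self _
          _ ≤ nE (z n - T (z n)) * nE (T (z n) - T zu) := habs _ _
          _ ≤ Real.sqrt (s n) * Real.sqrt ((B + ‖zu‖) ^ 2) := by
              rw [hsq1]
              exact mul_le_mul_of_nonneg_left hsq2 (Real.sqrt_nonneg _)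
        linarith
      have hlhs : Tendsto (fun n => 2 * E (z n - zu) v + N v) ↑U (nhds (N v)) := by
        have h1 : Tendsto (fun n => E (z n) v) ↑U (nhds (E zu v)) := hweak (P v)
        have h2 : Tendsto (fun n => E (z n - zu) v) ↑U (nhds 0) := by
          have heq : (fun n => E (z n - zu) v) = fun n => E (z n) v - E zu v := by
            funext n; exact hEsubL _ _ _
          rw [heq]
          have h3 := h1.sub_const (E zu v)
          simpa using h3
        have h4 := (h2.const_mul 2).add_const (N v)
        simpa using h4
      have hrhs0 : Tendsto (fun n => s n + 2 * (Real.sqrt (s n) * Real.sqrt ((B + ‖zu‖) ^ 2)))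
          atTop (nhds 0) := by
        have h1 : Tendsto (fun n => Real.sqrt (s n)) atTop (nhds 0) := by
          have h2 := (Real.continuous_sqrt.tendsto 0).comp hs0
          simpa [Function.comp_def] using h2
        have h3 : Tendsto (fun n => 2 * (Real.sqrt (s n) * Real.sqrt ((B + ‖zu‖) ^ 2)))
            atTop (nhds 0) := by
          have h4 := (h1.mul_const (Real.sqrt ((B + ‖zu‖) ^ 2))).const_mul 2
          simpa using h4
        have h5 := hs0.add h3
        simpa using h5
      have hNv : N v ≤ 0 :=
        le_of_tendsto_of_tendsto' hlhs (hrhs0.mono_left hU) hineq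
      have hv0 : v = 0 := hNzero v (le_antisymm hNv (hNnn v))
      rw [hvdef] at hv0
      exact (sub_eq_zero.mp hv0).symm
    exact ⟨zu, hfixu, hweak⟩
  -- conclusion
  obtain ⟨zs, hzs_fix, hzs_w⟩ := key_ultra (Ultrafilter.of atTop) (Ultrafilter.of_le _)
  refine ⟨zs, hzs_fix, ?_⟩
  intro w
  rw [tendsto_iff_ultrafilter]
  intro U hU
  obtain ⟨zu, hfixu, hwu⟩ := key_ultra U hU
  have huniq : zu = zs := by
    have hid : ∀ n, E (z n) (zu - zs)
        = (N (z n - zs) - N (z n - zu) - N zs + N zu) / 2 := by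
      intro n
      have h1 : N (z n - zs) = N (z n) - 2 * E (z n) zs + N zs := hNsub _ _
      have h2 : N (z n - zu) = N (z n) - 2 * E (z n) zu + N zu := hNsub _ _
      have h3 : E (z n) (zu - zs) = E (z n) zu - E (z n) zs := hEsubR _ _ _
      rw [h3]; linarith
    have hcv : Tendsto (fun n => E (z n) (zu - zs)) atTop
        (nhds (((⨅ n, N (z n - zs)) - (⨅ n, N (z n - zu)) - N zs + N zu) / 2)) := by
      simp only [hid]
      exact ((((hNconv zs hzs_fix).sub (hNconv zu hfixu)).sub_const (N zs)).add_const
        (N zu)).div_const 2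
    have e1 : E zs (zu - zs)
        = ((⨅ n, N (z n - zs)) - (⨅ n, N (z n - zu)) - N zs + N zu) / 2 :=
      tendsto_nhds_unique (hzs_w (P (zu - zs))) (hcv.mono_left (Ultrafilter.of_le _))
    have e2 : E zu (zu - zs)
        = ((⨅ n, N (z n - zs)) - (⨅ n, N (z n - zu)) - N zs + N zu) / 2 :=
      tendsto_nhds_unique (hwu (P (zu - zs))) (hcv.mono_left hU)
    have h3 : E (zu - zs) (zu - zs) = E zu (zu - zs) - E zs (zu - zs) := hEsubL _ _ _
    have h4 : N (zu - zs) = 0 := by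
      have : E (zu - zs) (zu - zs) = 0 := by rw [h3, e1, e2]; ring
      exact this
    exact sub_eq_zero.mp (hNzero _ h4)
  rw [← huniq]
  exact hwu w

/-- **Relaxed forward–backward algorithm, affine case.** Let `M` be maximally monotone and
`C z = Q z + c` with `Q` self-adjoint positive bounded nonzero, `ξ = 1/‖Q‖`, and suppose
`M + C` has a zero. For `γ ∈ (0, ξ)` and any sequence `(ρ i)` in `[0, 2]` with
`Σ_i ρ i (2 - ρ i) = +∞`, the iteration
`z (i+1) = z i + ρ i • (J_{γM}(z i - γ C (z i)) - z i)` converges weakly to a zero of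
`M + C`. -/
theorem forward_backward_convergence_affine {Z : Type*} [NormedAddCommGroup Z]
    [InnerProductSpace ℝ Z] [CompleteSpace Z]
    (M : Z → Set Z) (hM : SetValuedMaximallyMonotone M)
    (Q : Z →L[ℝ] Z) (hQsa : ∀ x y : Z, (⟪Q x, y⟫ : ℝ) = ⟪x, Q y⟫)
    (hQpos : ∀ x : Z, (0 : ℝ) ≤ ⟪x, Q x⟫) (hQne : Q ≠ 0)
    (c : Z) (C : Z → Z) (hC : ∀ z : Z, C z = Q z + c)
    (hzero : ∃ z : Z, -C z ∈ M z)
    (γ : ℝ) (hγ0 : 0 < γ) (hγ : γ < ‖Q‖⁻¹)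
    (J : Z → Z) (hJ : ∀ z : Z, γ⁻¹ • (z - J z) ∈ M (J z))
    (ρ : ℕ → ℝ) (hρ : ∀ i, ρ i ∈ Set.Icc (0 : ℝ) 2)
    (hdiv : ¬ Summable (fun i => ρ i * (2 - ρ i)))
    (z : ℕ → Z) (hrec : ∀ i, z (i + 1) = z i + ρ i • (J (z i - γ • C (z i)) - z i)) :
    ∃ zstar : Z, -C zstar ∈ M zstar ∧
      ∀ w : Z, Tendsto (fun i => (⟪z i, w⟫ : ℝ)) atTop (nhds ⟪zstar, w⟫) := by
  have hMmono := hM.1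
  have hQnorm : 0 < ‖Q‖ := norm_pos_iff.mpr hQne
  have hγQ : γ * ‖Q‖ < 1 := by
    have h1 := mul_lt_mul_of_pos_right hγ hQnorm
    rwa [inv_mul_cancel₀ hQnorm.ne'] at h1
  set P : Z →L[ℝ] Z := ContinuousLinearMap.id ℝ Z - γ • Q with hPdef
  have hPapp : ∀ x : Z, P x = x - γ • Q x := by
    intro x
    simp [hPdef, ContinuousLinearMap.sub_apply, ContinuousLinearMap.smul_apply]
  have hPsa : ∀ x y : Z, (⟪P x, y⟫ : ℝ) = ⟪x, P y⟫ := by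
    intro x y
    rw [hPapp, hPapp, inner_sub_left, inner_sub_right, real_inner_smul_left,
      real_inner_smul_right, hQsa]
  set δ : ℝ := 1 - γ * ‖Q‖ with hδdef
  have hδ : 0 < δ := by rw [hδdef]; linarith
  have hPlow : ∀ x : Z, δ * ‖x‖ ^ 2 ≤ ⟪x, P x⟫ := by
    intro x
    rw [hPapp, inner_sub_right, real_inner_smul_right, real_inner_self_eq_norm_sq]
    have h1 : (⟪x, Q x⟫ : ℝ) ≤ ‖x‖ * ‖Q x‖ := real_inner_le_norm _ _
    have h2 : ‖Q x‖ ≤ ‖Q‖ * ‖x‖ := Q.le_opNorm x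
    have h3 : (⟪x, Q x⟫ : ℝ) ≤ ‖Q‖ * ‖x‖ ^ 2 := by nlinarith [norm_nonneg x]
    rw [hδdef]
    nlinarith [hγ0.le]
  have hPup : ∀ x : Z, (⟪x, P x⟫ : ℝ) ≤ ‖x‖ ^ 2 := by
    intro x
    rw [hPapp, inner_sub_right, real_inner_smul_right, real_inner_self_eq_norm_sq]
    nlinarith [hQpos x, hγ0.le]
  set T : Z → Z := fun x => J (x - γ • C x) with hTdef
  -- resolvent uniqueness style facts
  have hfirm : ∀ x y : Z, (⟪T x - T y, P (T x - T y)⟫ : ℝ) ≤ ⟪T x - T y, P (x - y)⟫ := by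
    intro x y
    have h1 := hJ (x - γ • C x)
    have h2 := hJ (y - γ • C y)
    have hmon := hMmono h1 h2
    have harg : γ⁻¹ • (x - γ • C x - J (x - γ • C x)) - γ⁻¹ • (y - γ • C y - J (y - γ • C y))
        = γ⁻¹ • (P (x - y) - (T x - T y)) := by
      rw [hPapp, ← smul_sub]
      congr 1
      simp only [hTdef, hC, map_sub]
      module
    rw [harg, real_inner_smul_right, inner_sub_right] at hmon
    have hγinv : 0 < γ⁻¹ := inv_pos.mpr hγ0
    have h3 : (⟪T x - T y, T x - T y⟫ : ℝ) ≤ ⟪T x - T y, P (x - y)⟫ := by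
      by_contra hcon
      push_neg at hcon
      nlinarith [hmon]
    have h4 : (⟪T x - T y, P (T x - T y)⟫ : ℝ) ≤ ⟪T x - T y, T x - T y⟫ := by
      rw [hPapp, inner_sub_right, real_inner_smul_right]
      nlinarith [hQpos (T x - T y), hγ0.le]
    linarith
  -- the scalar simplification used twice
  have hscal : ∀ x : Z, γ⁻¹ • (x - γ • C x - x) = -C x := by
    intro x
    have h : x - γ • C x - x = -(γ • C x) := by abel
    rw [h, smul_neg, smul_smul, inv_mul_cancel₀ hγ0.ne', one_smul]
  -- fixed point from a zero
  obtain ⟨z₀, hz₀⟩ := hzero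
  have hf₀ : T z₀ = z₀ := by
    have h1 := hJ (z₀ - γ • C z₀)
    have h2 : γ⁻¹ • (z₀ - γ • C z₀ - z₀) ∈ M z₀ := by
      rw [hscal z₀]; exact hz₀
    have hmon := hMmono h1 h2
    have harg : γ⁻¹ • (z₀ - γ • C z₀ - J (z₀ - γ • C z₀)) - γ⁻¹ • (z₀ - γ • C z₀ - z₀)
        = γ⁻¹ • (z₀ - J (z₀ - γ • C z₀)) := by
      rw [← smul_sub]; congr 1; abel
    rw [harg, real_inner_smul_right] at hmon
    have h3 : (⟪J (z₀ - γ • C z₀) - z₀, z₀ - J (z₀ - γ • C z₀)⟫ : ℝ)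
        = -‖J (z₀ - γ • C z₀) - z₀‖ ^ 2 := by
      rw [show z₀ - J (z₀ - γ • C z₀) = -(J (z₀ - γ • C z₀) - z₀) by abel, inner_neg_right,
        real_inner_self_eq_norm_sq]
    rw [h3] at hmon
    have hγinv : 0 < γ⁻¹ := inv_pos.mpr hγ0
    have h4 : ‖J (z₀ - γ • C z₀) - z₀‖ ^ 2 ≤ 0 := by nlinarith
    have h5 : ‖J (z₀ - γ • C z₀) - z₀‖ = 0 := by
      nlinarith [norm_nonneg (J (z₀ - γ • C z₀) - z₀)]
    have h6 : J (z₀ - γ • C z₀) - z₀ = 0 := by simpa using h5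
    show J (z₀ - γ • C z₀) = z₀
    rw [sub_eq_zero] at h6
    exact h6
  obtain ⟨zs, hfix, hconv⟩ := km_core P hPsa δ hδ hPlow hPup T hfirm z₀ hf₀ ρ hρ hdiv z hrec
  refine ⟨zs, ?_, hconv⟩
  have h1 := hJ (zs - γ • C zs)
  have h2 : J (zs - γ • C zs) = zs := hfix
  rw [h2] at h1
  rwa [hscal zs] at h1
end

section
/- Let f, g ∈ Γ₀(X) with 0 ∈ ∂f(x⋆) + ∂g(x⋆) for some x⋆, and τ > 0. If s⋆ is a fixed point of the Douglas–Rachford operator s ↦ s + prox_{τg}(2 prox_{τf}(s) − s) − prox_{τf}(s), then x = prox_{τf}(s⋆) satisfies 0 ∈ ∂f(x) + ∂g(x), i.e., x minimizes f + g over points satisfying the inclusion. -/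
open RealInnerProductSpace

/-- The convex subdifferential of `f` at `x`. -/
def Subdiff {X : Type*} [NormedAddCommGroup X] [InnerProductSpace ℝ X]
    (f : X → ℝ) (x : X) : Set X :=
  {u : X | ∀ y : X, f x + ⟪y - x, u⟫ ≤ f y}

lemma subdiff_of_prox {X : Type*} [NormedAddCommGroup X] [InnerProductSpace ℝ X]
    {f : X → ℝ} (hfconv : ConvexOn ℝ Set.univ f) {τ : ℝ} (hτ : 0 < τ) (s p : X)
    (h : ∀ y : X, τ * f p + (1 / 2) * ‖s - p‖ ^ 2 ≤ τ * f y + (1 / 2) * ‖s - y‖ ^ 2) :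
    τ⁻¹ • (s - p) ∈ Subdiff f p := by
  intro y
  have key : ⟪s - p, y - p⟫ ≤ τ * (f y - f p) := by
    apply le_of_forall_pos_le_add
    intro ε hε
    set t : ℝ := min 1 (ε / (‖y - p‖ ^ 2 / 2 + 1)) with ht
    have hden : (0:ℝ) < ‖y - p‖ ^ 2 / 2 + 1 := by positivity
    have ht0 : 0 < t := lt_min one_pos (div_pos hε hden)
    have ht1 : t ≤ 1 := min_le_left _ _
    have hconv := hfconv.2 (Set.mem_univ p) (Set.mem_univ y)
      (by linarith : (0:ℝ) ≤ 1 - t) (le_of_lt ht0) (by ring)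
    have hpt : (1 - t) • p + t • y = p + t • (y - p) := by
      simp [smul_sub, sub_smul]; abel
    rw [hpt] at hconv
    have hineq := h (p + t • (y - p))
    have hnorm : ‖s - (p + t • (y - p))‖ ^ 2
        = ‖s - p‖ ^ 2 - 2 * t * ⟪s - p, y - p⟫ + t ^ 2 * ‖y - p‖ ^ 2 := by
      have : s - (p + t • (y - p)) = (s - p) - t • (y - p) := by abel
      rw [this, norm_sub_sq_real, real_inner_smul_right, norm_smul]
      simp [mul_pow, abs_of_pos ht0]
      ring
    have h2 : t * ⟪s - p, y - p⟫ ≤ τ * t * (f y - f p) + t ^ 2 / 2 * ‖y - p‖ ^ 2 := by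
      simp only [smul_eq_mul] at hconv
      nlinarith [hineq, hnorm, mul_le_mul_of_nonneg_left hconv hτ.le]
    have h3 : ⟪s - p, y - p⟫ ≤ τ * (f y - f p) + t / 2 * ‖y - p‖ ^ 2 := by
      have := mul_le_mul_of_nonneg_left h2 (le_of_lt (inv_pos.mpr ht0))
      rw [mul_add] at this
      calc ⟪s - p, y - p⟫ = t⁻¹ * (t * ⟪s - p, y - p⟫) := by
            field_simp
        _ ≤ t⁻¹ * (τ * t * (f y - f p)) + t⁻¹ * (t ^ 2 / 2 * ‖y - p‖ ^ 2) := this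
        _ = τ * (f y - f p) + t / 2 * ‖y - p‖ ^ 2 := by
            field_simp
    have htε : t / 2 * ‖y - p‖ ^ 2 ≤ ε := by
      have h4 : t ≤ ε / (‖y - p‖ ^ 2 / 2 + 1) := min_le_right _ _
      have h5 : t * (‖y - p‖ ^ 2 / 2 + 1) ≤ ε := by
        rw [← le_div_iff₀ hden]; exact h4
      nlinarith [sq_nonneg ‖y - p‖, ht0]
    linarith
  have : ⟪y - p, τ⁻¹ • (s - p)⟫ = τ⁻¹ * ⟪s - p, y - p⟫ := by
    rw [real_inner_smul_right, real_inner_comm]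
  rw [this]
  have := mul_le_mul_of_nonneg_left key (le_of_lt (inv_pos.mpr hτ))
  rw [← mul_assoc, inv_mul_cancel₀ (ne_of_gt hτ), one_mul] at this
  linarith

/-- Let `f, g` be convex lower semicontinuous functions on a real Hilbert space, with
`0 ∈ ∂f(x⋆) + ∂g(x⋆)` for some `x⋆`, and `τ > 0`. If `sstar` is a fixed point of the
Douglas–Rachford operator `s ↦ s + prox_{τ g}(2 prox_{τ f}(s) - s) - prox_{τ f}(s)`,
then `x = prox_{τ f}(sstar)` satisfies `0 ∈ ∂f(x) + ∂g(x)`. -/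
theorem douglas_rachford_fixed_point_solution {X : Type*} [NormedAddCommGroup X]
    [InnerProductSpace ℝ X] [CompleteSpace X]
    (f g : X → ℝ) (hfconv : ConvexOn ℝ Set.univ f) (hflsc : LowerSemicontinuous f)
    (hgconv : ConvexOn ℝ Set.univ g) (hglsc : LowerSemicontinuous g)
    (hsol : ∃ xstar : X, (0 : X) ∈ (fun p : X × X => p.1 + p.2) '' (Subdiff f xstar ×ˢ Subdiff g xstar))
    (τ : ℝ) (hτ : 0 < τ) (pf pg : X → X)
    (hpf : ∀ s y : X, τ * f (pf s) + (1 / 2) * ‖s - pf s‖ ^ 2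
      ≤ τ * f y + (1 / 2) * ‖s - y‖ ^ 2)
    (hpg : ∀ s y : X, τ * g (pg s) + (1 / 2) * ‖s - pg s‖ ^ 2
      ≤ τ * g y + (1 / 2) * ‖s - y‖ ^ 2)
    (sstar : X)
    (hfix : sstar + pg ((2 : ℝ) • pf sstar - sstar) - pf sstar = sstar) :
    ∃ u ∈ Subdiff f (pf sstar), ∃ v ∈ Subdiff g (pf sstar), u + v = 0 := by
  set x := pf sstar with hx
  set r := (2 : ℝ) • x - sstar with hr
  have hpgr : pg r = x := by
    have := hfix
    rw [add_sub_assoc, add_eq_left, sub_eq_zero] at this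
    exact this
  have hu : τ⁻¹ • (sstar - x) ∈ Subdiff f x :=
    subdiff_of_prox hfconv hτ sstar x (hpf sstar)
  have hv : τ⁻¹ • (r - x) ∈ Subdiff g x := by
    have h := subdiff_of_prox hgconv hτ r (pg r) (hpg r)
    rwa [hpgr] at h
  refine ⟨_, hu, _, hv, ?_⟩
  rw [← smul_add]
  have : sstar - x + (r - x) = 0 := by
    rw [hr, two_smul]; abel
  rw [this, smul_zero]
end

section
/- Let f ∈ Γ₀(X), g ∈ Γ₀(U), L : X → U bounded linear, and τ, σ > 0 with τσ‖L‖² < 1. Then the operator P on X × U defined by the block matrix P(x,u) = ((1/τ)x − L*u, −Lx + (1/σ)u) is self-adjoint, bounded, and strongly positive. -/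
open RealInnerProductSpace

/-- Let `f ∈ Γ₀(X)`, `g ∈ Γ₀(U)` (here real-valued convex lsc), `L : X → U` bounded linear
and `τ, σ > 0` with `τ σ ‖L‖² < 1`. Then the operator `P` on `X × U` defined by
`P (x, u) = ((1/τ) x - L* u, -L x + (1/σ) u)` is self-adjoint, bounded, and strongly
positive (all expressed componentwise for the natural inner product of `X × U`). -/
theorem primal_dual_preconditioner_strongly_positive {X U : Type*}
    [NormedAddCommGroup X] [InnerProductSpace ℝ X] [CompleteSpace X]
    [NormedAddCommGroup U] [InnerProductSpace ℝ U] [CompleteSpace U]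
    (f : X → ℝ) (hfconv : ConvexOn ℝ Set.univ f) (hflsc : LowerSemicontinuous f)
    (g : U → ℝ) (hgconv : ConvexOn ℝ Set.univ g) (hglsc : LowerSemicontinuous g)
    (L : X →L[ℝ] U) (τ σ : ℝ) (hτ : 0 < τ) (hσ : 0 < σ) (hτσ : τ * σ * ‖L‖ ^ 2 < 1)
    (P1 : X → U → X) (P2 : X → U → U)
    (hP1 : ∀ x u, P1 x u = τ⁻¹ • x - ContinuousLinearMap.adjoint L u)
    (hP2 : ∀ x u, P2 x u = -(L x) + σ⁻¹ • u) :
    (∀ x u x' u', (⟪P1 x u, x'⟫ : ℝ) + ⟪P2 x u, u'⟫ = ⟪x, P1 x' u'⟫ + ⟪u, P2 x' u'⟫) ∧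
      (∃ cb : ℝ, ∀ x u, ‖P1 x u‖ ^ 2 + ‖P2 x u‖ ^ 2 ≤ cb * (‖x‖ ^ 2 + ‖u‖ ^ 2)) ∧
      (∃ a : ℝ, 0 < a ∧
        ∀ x u, a * (‖x‖ ^ 2 + ‖u‖ ^ 2) ≤ (⟪x, P1 x u⟫ : ℝ) + ⟪u, P2 x u⟫) := by
  have hadjnorm : ‖ContinuousLinearMap.adjoint L‖ = ‖L‖ :=
    (ContinuousLinearMap.adjoint : (X →L[ℝ] U) ≃ₗᵢ⋆[ℝ] _).norm_map L
  have hτ' : 0 < τ⁻¹ := inv_pos.mpr hτ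
  have hσ' : 0 < σ⁻¹ := inv_pos.mpr hσ
  refine ⟨?_, ?_, ?_⟩
  · intro x u x' u'
    simp only [hP1, hP2, inner_sub_left, inner_sub_right, inner_add_left, inner_add_right,
      real_inner_smul_left, real_inner_smul_right, inner_neg_left, inner_neg_right,
      ContinuousLinearMap.adjoint_inner_left, ContinuousLinearMap.adjoint_inner_right]
    ring
  · refine ⟨2 * (τ⁻¹ ^ 2 + σ⁻¹ ^ 2 + ‖L‖ ^ 2), fun x u => ?_⟩
    have h1 : ‖P1 x u‖ ≤ τ⁻¹ * ‖x‖ + ‖L‖ * ‖u‖ := by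
      rw [hP1]
      refine (norm_sub_le _ _).trans ?_
      have h := (ContinuousLinearMap.adjoint L).le_opNorm u
      rw [hadjnorm] at h
      have hs : ‖τ⁻¹ • x‖ = τ⁻¹ * ‖x‖ := by
        rw [norm_smul, Real.norm_eq_abs, abs_of_pos hτ']
      linarith
    have h2 : ‖P2 x u‖ ≤ ‖L‖ * ‖x‖ + σ⁻¹ * ‖u‖ := by
      rw [hP2]
      refine (norm_add_le _ _).trans ?_
      have h := L.le_opNorm x
      have hs : ‖σ⁻¹ • u‖ = σ⁻¹ * ‖u‖ := by
        rw [norm_smul, Real.norm_eq_abs, abs_of_pos hσ']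
      rw [norm_neg]
      linarith
    have hn1 : (0:ℝ) ≤ ‖P1 x u‖ := norm_nonneg _
    have hn2 : (0:ℝ) ≤ ‖P2 x u‖ := norm_nonneg _
    nlinarith [sq_nonneg (τ⁻¹ * ‖x‖ - ‖L‖ * ‖u‖), sq_nonneg (‖L‖ * ‖x‖ - σ⁻¹ * ‖u‖),
      sq_nonneg ‖x‖, sq_nonneg ‖u‖, norm_nonneg x, norm_nonneg u, norm_nonneg L,
      mul_self_nonneg (τ⁻¹ * ‖x‖ + ‖L‖ * ‖u‖), mul_self_nonneg (‖L‖ * ‖x‖ + σ⁻¹ * ‖u‖)]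
  · set c := ‖L‖ with hc
    have hc0 : 0 ≤ c := norm_nonneg L
    set A := τ⁻¹ with hA
    set B := σ⁻¹ with hB
    have hAB : A * B * (τ * σ) = 1 := by rw [hA, hB]; field_simp
    have hD : 0 < A * B - c ^ 2 := by nlinarith [mul_pos hτ hσ]
    have hABpos : 0 < A + B := by positivity
    refine ⟨(A * B - c ^ 2) / (A + B), div_pos hD hABpos, fun x u => ?_⟩
    set a := (A * B - c ^ 2) / (A + B) with ha
    have hkey : a * (A + B) = A * B - c ^ 2 := div_mul_cancel₀ _ (ne_of_gt hABpos)
    have haA : a < A := by nlinarith [mul_pos hτ' hσ']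
    have hLxu : (⟪L x, u⟫ : ℝ) ≤ c * ‖x‖ * ‖u‖ := by
      refine (real_inner_le_norm _ _).trans ?_
      have := L.le_opNorm x
      nlinarith [norm_nonneg u]
    have hexp : (⟪x, P1 x u⟫ : ℝ) + ⟪u, P2 x u⟫
        = A * ‖x‖ ^ 2 + B * ‖u‖ ^ 2 - 2 * ⟪L x, u⟫ := by
      rw [hP1, hP2]
      simp only [inner_sub_right, inner_add_right, real_inner_smul_right, inner_neg_right,
        ContinuousLinearMap.adjoint_inner_right, real_inner_self_eq_norm_sq]
      rw [real_inner_comm u (L x)]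
      ring
    rw [hexp]
    nlinarith [sq_nonneg ((A - a) * ‖x‖ - c * ‖u‖), sq_nonneg (a * ‖u‖),
      norm_nonneg x, norm_nonneg u, sq_nonneg ‖u‖]
end

section
/- In the Condat–Vũ setting, let P be the operator on Z = X × U given by P(x,u) = ((1/τ)x − L*u, −Lx + (1/σ)u) with τ(σ‖L‖² + β/2) < 1, and let C(x,u) = (∇h(x), 0) where ∇h is β-Lipschitz and (1/β)-cocoercive. Then P⁻¹C is χ-cocoercive on Z_P with χ = (1/β)(1/τ − σ‖L‖²), and χ > 1/2. -/
open RealInnerProductSpace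

/-- **Cocoercivity in the Condat–Vũ metric.** Let `Z = X × U`, `P (x, u) =
((1/τ) x - L* u, -L x + (1/σ) u)` with `τ (σ ‖L‖² + β/2) < 1`, and `C (x, u) = (h' x, 0)`
where `h'` is the `β`-Lipschitz and `(1/β)`-cocoercive gradient of a convex function `h`.
Then `P⁻¹ C` is `χ`-cocoercive on `Z_P` with `χ = (1/β)(1/τ - σ ‖L‖²)`, and `χ > 1/2`.
Cocoercivity in `Z_P` is expressed as: for every `z = (x, u)`, `z' = (x', u')` and every
`w = (w1, w2)` with `P w = C z - C z'`, one has
`χ ⟨w, C z - C z'⟩ ≤ ⟨z - z', C z - C z'⟩`, i.e.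
`χ ⟨w1, h' x - h' x'⟩ ≤ ⟨x - x', h' x - h' x'⟩`. -/
theorem condat_vu_cocoercivity {X U : Type*}
    [NormedAddCommGroup X] [InnerProductSpace ℝ X] [CompleteSpace X]
    [NormedAddCommGroup U] [InnerProductSpace ℝ U] [CompleteSpace U]
    (L : X →L[ℝ] U) (τ σ β : ℝ) (hτ : 0 < τ) (hσ : 0 < σ) (hβ : 0 < β)
    (hcond : τ * (σ * ‖L‖ ^ 2 + β / 2) < 1)
    (h : X → ℝ) (hconv : ConvexOn ℝ Set.univ h)
    (h' : X → X) (hgrad : ∀ x : X, HasGradientAt h (h' x) x)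
    (hlip : ∀ x y : X, ‖h' x - h' y‖ ≤ β * ‖x - y‖)
    (hcoco : ∀ x y : X, β⁻¹ * ‖h' x - h' y‖ ^ 2 ≤ ⟪x - y, h' x - h' y⟫) :
    (1 / 2 : ℝ) < β⁻¹ * (τ⁻¹ - σ * ‖L‖ ^ 2) ∧
      ∀ (x x' : X) (u u' : U) (w1 : X) (w2 : U),
        τ⁻¹ • w1 - ContinuousLinearMap.adjoint L w2 = h' x - h' x' →
        -(L w1) + σ⁻¹ • w2 = 0 →
        (β⁻¹ * (τ⁻¹ - σ * ‖L‖ ^ 2)) * ⟪w1, h' x - h' x'⟫ ≤ ⟪x - x', h' x - h' x'⟫ := by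

  have hc : β / 2 < τ⁻¹ - σ * ‖L‖ ^ 2 := by
    have h1 : σ * ‖L‖ ^ 2 + β / 2 < τ⁻¹ := by
      rw [← one_div]
      rw [lt_div_iff₀ hτ]
      linarith [hcond]
    linarith
  have hc0 : 0 < τ⁻¹ - σ * ‖L‖ ^ 2 := by linarith
  constructor
  · rw [inv_mul_eq_div, lt_div_iff₀ hβ]
    linarith
  · intro x x' u u' w1 w2 h1 h2
    set d := h' x - h' x' with hd
    set c := τ⁻¹ - σ * ‖L‖ ^ 2 with hcdef
    have hw2 : w2 = σ • L w1 := by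
      have : σ⁻¹ • w2 = L w1 := by
        have := h2
        rw [neg_add_eq_zero] at this
        exact this.symm
      rw [← this, smul_smul, mul_inv_cancel₀ (ne_of_gt hσ), one_smul]
    have hip : ⟪w1, d⟫ = τ⁻¹ * ‖w1‖ ^ 2 - σ * ‖L w1‖ ^ 2 := by
      rw [← h1, hw2]
      rw [inner_sub_right, real_inner_smul_right, real_inner_self_eq_norm_sq]
      rw [ContinuousLinearMap.adjoint_inner_right, real_inner_smul_right]
      rw [real_inner_self_eq_norm_sq]
    have hLw : ‖L w1‖ ≤ ‖L‖ * ‖w1‖ := L.le_opNorm w1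
    have hLn : 0 ≤ ‖L‖ := norm_nonneg _
    have hwn : 0 ≤ ‖w1‖ := norm_nonneg _
    have hlow : c * ‖w1‖ ^ 2 ≤ ⟪w1, d⟫ := by
      rw [hip, hcdef]
      have : σ * ‖L w1‖ ^ 2 ≤ σ * (‖L‖ ^ 2 * ‖w1‖ ^ 2) := by
        apply mul_le_mul_of_nonneg_left _ (le_of_lt hσ)
        calc ‖L w1‖ ^ 2 ≤ (‖L‖ * ‖w1‖) ^ 2 := by
              apply pow_le_pow_left₀ (norm_nonneg _) hLw
        _ = ‖L‖ ^ 2 * ‖w1‖ ^ 2 := by ring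
      nlinarith
    have hcs : ⟪w1, d⟫ ≤ ‖w1‖ * ‖d‖ := real_inner_le_norm w1 d
    have hnn : 0 ≤ ⟪w1, d⟫ := le_trans (by positivity) hlow
    have hkey : c * ⟪w1, d⟫ ≤ ‖d‖ ^ 2 := by
      rcases eq_or_lt_of_le hwn with hz | hz
      · have hz0 : ‖w1‖ * ‖d‖ = 0 := by rw [← hz]; ring
        have : ⟪w1, d⟫ = 0 := le_antisymm (by linarith) hnn
        rw [this]
        nlinarith [sq_nonneg ‖d‖]
      · have h3 : c * ‖w1‖ ≤ ‖d‖ := by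
          have := le_trans hlow hcs
          nlinarith
        calc c * ⟪w1, d⟫ ≤ c * (‖w1‖ * ‖d‖) :=
              mul_le_mul_of_nonneg_left hcs (le_of_lt hc0)
        _ = (c * ‖w1‖) * ‖d‖ := by ring
        _ ≤ ‖d‖ * ‖d‖ := mul_le_mul_of_nonneg_right h3 (norm_nonneg _)
        _ = ‖d‖ ^ 2 := by ring
    calc β⁻¹ * c * ⟪w1, d⟫ = β⁻¹ * (c * ⟪w1, d⟫) := by ring
    _ ≤ β⁻¹ * ‖d‖ ^ 2 := by
        apply mul_le_mul_of_nonneg_left hkey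
        positivity
    _ ≤ ⟪x - x', d⟫ := hcoco x x'
end

section
/- Let 𝐗 = X^M with weighted inner product ⟨𝐱, 𝐱'⟩ = Σ_m ω_m⟨x_m, x'_m⟩ where ω_m > 0 and Σ_m ω_m = 1, f ∈ Γ₀(X), and define 𝐟(𝐱) = f(x_1) + ι_=(𝐱) where ι_= is the indicator of the diagonal {𝐱 : x_1 = ⋯ = x_M}. Then for any γ > 0, prox_{γ𝐟}(𝐱) = (x', …, x') with x' = prox_{γf}(Σ_m ω_m x_m). -/
open RealInnerProductSpace Finset Classical

/-- **Consensus prox.** Let `𝐗 = X^M` with weighted inner product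
`⟨𝐱, 𝐱'⟩ = Σ_m ω m ⟨x_m, x'_m⟩` where `ω m > 0` and `Σ_m ω m = 1`, let `f ∈ Γ₀(X)`
(real-valued convex lsc), and define `𝐟(𝐱) = f(x_1) + ι_=(𝐱)` where `ι_=` is the
indicator of the diagonal. Then for any `γ > 0`,
`prox_{γ 𝐟}(𝐱) = (x', …, x')` with `x' = prox_{γ f}(Σ_m ω m x_m)`: the constant tuple
`(x', …, x')` minimizes `q ↦ γ 𝐟(q) + ½ ‖𝐱 - q‖²_ω` over all tuples `q` (the objective,
with values in `EReal`, being `+∞` off the diagonal). -/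

theorem prox_consensus {X : Type*} [NormedAddCommGroup X] [InnerProductSpace ℝ X]
    [CompleteSpace X] {M : ℕ} [NeZero M]
    (f : X → ℝ) (hfconv : ConvexOn ℝ Set.univ f) (hflsc : LowerSemicontinuous f)
    (ω : Fin M → ℝ) (hω : ∀ m, 0 < ω m) (hωsum : ∑ m, ω m = 1)
    (γ : ℝ) (hγ : 0 < γ) (x : Fin M → X) (x' : X)
    (hx' : ∀ y : X,
      γ * f x' + (1 / 2) * ‖(∑ m, ω m • x m) - x'‖ ^ 2
        ≤ γ * f y + (1 / 2) * ‖(∑ m, ω m • x m) - y‖ ^ 2) :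
    ∀ q : Fin M → X,
      ((γ * f x' + (1 / 2) * ∑ m, ω m * ‖x m - x'‖ ^ 2 : ℝ) : EReal)
        ≤ if ∀ m, q m = q 0 then
            ((γ * f (q 0) + (1 / 2) * ∑ m, ω m * ‖x m - q m‖ ^ 2 : ℝ) : EReal)
          else ⊤ := by
  intro q
  set xbar := ∑ m, ω m • x m with hxbar
  have expand : ∀ y : X, ∑ m, ω m * ‖x m - y‖ ^ 2
      = (∑ m, ω m * ‖x m‖ ^ 2) - 2 * ⟪xbar, y⟫ + ‖y‖ ^ 2 := by
    intro y
    have h1 : ⟪xbar, y⟫ = ∑ m, ω m * ⟪x m, y⟫ := by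
      simp [hxbar, sum_inner, real_inner_smul_left]
    have h2 : ∀ m : Fin M, ω m * ‖x m - y‖ ^ 2
        = ω m * ‖x m‖ ^ 2 - 2 * (ω m * ⟪x m, y⟫) + ω m * ‖y‖ ^ 2 := by
      intro m
      have := @norm_sub_sq_real X _ _ (x m) y
      rw [this]; ring
    rw [Finset.sum_congr rfl fun m _ => h2 m]
    rw [Finset.sum_add_distrib, Finset.sum_sub_distrib, ← Finset.mul_sum, ← h1,
      ← Finset.sum_mul, hωsum]
    ring
  split_ifs with h
  · rw [EReal.coe_le_coe_iff]
    have hq : ∑ m, ω m * ‖x m - q m‖ ^ 2 = ∑ m, ω m * ‖x m - q 0‖ ^ 2 :=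
      Finset.sum_congr rfl fun m _ => by rw [h m]
    rw [hq, expand x', expand (q 0)]
    have key := hx' (q 0)
    have e1 : ‖xbar - x'‖ ^ 2 = ‖xbar‖ ^ 2 - 2 * ⟪xbar, x'⟫ + ‖x'‖ ^ 2 := by
      rw [@norm_sub_sq_real X _ _ xbar x']
    have e2 : ‖xbar - q 0‖ ^ 2 = ‖xbar‖ ^ 2 - 2 * ⟪xbar, q 0⟫ + ‖q 0‖ ^ 2 := by
      rw [@norm_sub_sq_real X _ _ xbar (q 0)]
    rw [e1, e2] at key
    linarith
  · exact le_top
end
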